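/- arXiv:1406.5995 — 8 statements merged into one kernel-verified Lean document; each statement's English description precedes it below -/
import Mathlib

section
/- For every natural number n there exists a polynomial P_n in n variables X_1, …, X_n with integer coefficients, whose term of maximal degree in X_1 is exactly X_1^n (i.e., P_n − X_1^n has degree in X_1 strictly less than n), such that for every real number x that is not a nonpositive integer, Γ^{(n)}(x) = Γ(x) · P_n(Ψ(x), Ψ^{(1)}(x), …, Ψ^{(n−1)}(x)), where Γ^{(n)} denotes the n-th derivative of the Gamma function and Ψ^{(i)} the i-th derivative of the Digamma function. -/
open MvPolynomial Finset Topology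

noncomputable def Digamma (x : ℝ) : ℝ := deriv Real.Gamma x / Real.Gamma x


def Sset : Set ℝ := {x : ℝ | ∀ m : ℕ, x ≠ -(m : ℝ)}

lemma isOpen_S : IsOpen Sset := by
  have h : IsClosedEmbedding (fun m : ℕ => -(m : ℝ)) :=
    (Homeomorph.neg ℝ).isClosedEmbedding.comp Nat.isClosedEmbedding_coe_real
  have : Sset = (Set.range fun m : ℕ => -(m : ℝ))ᶜ := by
    ext x
    constructor
    · intro hx hmem
      obtain ⟨m, hm⟩ := hmem
      exact hx m hm.symm
    · intro hx m hm
      exact hx ⟨m, hm.symm⟩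
  rw [this]
  exact h.isClosed_range.isOpen_compl

lemma analyticOnNhd_Gamma : AnalyticOnNhd ℝ Real.Gamma Sset := by
  intro x hx
  have hU : IsOpen {s : ℂ | ∀ m : ℕ, s ≠ -(m : ℂ)} := by
    have h : IsClosedEmbedding (fun m : ℕ => -(m : ℂ)) := by
      have h2 : IsClosedEmbedding (fun r : ℝ => (r : ℂ)) :=
        Complex.ofRealLI.isometry.isClosedEmbedding
      have := h2.comp ((Homeomorph.neg ℝ).isClosedEmbedding.comp Nat.isClosedEmbedding_coe_real)
      convert this using 1
      funext m; simp
    have : {s : ℂ | ∀ m : ℕ, s ≠ -(m:ℂ)} = (Set.range fun m : ℕ => -(m : ℂ))ᶜ := by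
      ext s
      constructor
      · intro hs hmem
        obtain ⟨m, hm⟩ := hmem
        exact hs m hm.symm
      · intro hs m hm
        exact hs ⟨m, hm.symm⟩
    rw [this]
    exact h.isClosed_range.isOpen_compl
  have hmem : (x : ℂ) ∈ {s : ℂ | ∀ m : ℕ, s ≠ -(m : ℂ)} := by
    intro m h
    exact hx m (by exact_mod_cast h)
  have hC : AnalyticAt ℂ Complex.Gamma (x : ℂ) :=
    (DifferentiableOn.analyticOnNhd
      (fun s hs => (Complex.differentiableAt_Gamma s hs).differentiableWithinAt) hU) _ hmem
  have h1 : AnalyticAt ℝ (fun y : ℝ => Complex.Gamma y) x :=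
    (hC.restrictScalars).comp (Complex.ofRealCLM.analyticAt x)
  have h2 : AnalyticAt ℝ (fun y : ℝ => (Complex.Gamma y).re) x :=
    (Complex.reCLM.analyticAt _).comp h1
  have : Real.Gamma = fun y : ℝ => (Complex.Gamma y).re := by
    funext y; rw [Complex.Gamma_ofReal, Complex.ofReal_re]
  rw [this]
  exact h2

lemma analyticOnNhd_Digamma : AnalyticOnNhd ℝ Digamma Sset :=
  (analyticOnNhd_Gamma.deriv).div analyticOnNhd_Gamma fun x hx => Real.Gamma_ne_zero hx

lemma analyticOnNhd_iteratedDeriv_Digamma (i : ℕ) :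
    AnalyticOnNhd ℝ (iteratedDeriv i Digamma) Sset := by
  induction i with
  | zero => simpa [iteratedDeriv_zero] using analyticOnNhd_Digamma
  | succ i ih => rw [iteratedDeriv_succ]; exact ih.deriv


lemma sum_pderiv_subset (g' : ℕ → ℝ) (v : ℕ → ℝ) (P : MvPolynomial ℕ ℤ) {t : Finset ℕ}
    (h : P.vars ⊆ t) :
    ∑ i ∈ P.vars, (aeval v (pderiv i P)) * g' i = ∑ i ∈ t, (aeval v (pderiv i P)) * g' i :=
  Finset.sum_subset h (fun i _ hi => by
    rw [pderiv_eq_zero_of_notMem_vars hi, map_zero, zero_mul])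

lemma aeval_hasDerivAt (g : ℕ → ℝ → ℝ) (g' : ℕ → ℝ) (x : ℝ)
    (hg : ∀ i, HasDerivAt (g i) (g' i) x) (P : MvPolynomial ℕ ℤ) :
    HasDerivAt (fun y => aeval (fun i => g i y) P)
      (∑ i ∈ P.vars, aeval (fun i => g i x) (pderiv i P) * g' i) x := by
  classical
  induction P using MvPolynomial.induction_on with
  | C a =>
      simp only [aeval_C, vars_C, Finset.sum_empty]
      exact hasDerivAt_const x _
  | add p q hp hq =>
      have hsub1 : p.vars ⊆ p.vars ∪ q.vars ∪ (p + q).vars := fun i hi => by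
        simp [hi]
      have hsub2 : q.vars ⊆ p.vars ∪ q.vars ∪ (p + q).vars := fun i hi => by
        simp [hi]
      have hsub3 : (p + q).vars ⊆ p.vars ∪ q.vars ∪ (p + q).vars := fun i hi => by
        simp [hi]
      have hs : ∑ i ∈ (p + q).vars, aeval (fun i => g i x) (pderiv i (p + q)) * g' i
          = (∑ i ∈ p.vars, aeval (fun i => g i x) (pderiv i p) * g' i)
          + (∑ i ∈ q.vars, aeval (fun i => g i x) (pderiv i q) * g' i) := by
        rw [sum_pderiv_subset _ _ _ hsub3, sum_pderiv_subset _ _ _ hsub1,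
            sum_pderiv_subset _ _ _ hsub2, ← Finset.sum_add_distrib]
        refine Finset.sum_congr rfl fun i _ => ?_
        rw [map_add, map_add, add_mul]
      rw [hs]
      simpa only [map_add] using hp.fun_add hq
  | mul_X p j hp =>
      have heq : (fun y => aeval (fun i => g i y) (p * X j))
          = fun y => aeval (fun i => g i y) p * g j y := by
        funext y; rw [map_mul, aeval_X]
      rw [heq]
      have key := hp.fun_mul (hg j)
      refine key.congr_deriv (Eq.symm ?_)
      have hsub1 : p.vars ⊆ (p * X j).vars ∪ p.vars ∪ {j} := fun i hi => by simp [hi]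
      have hsub3 : (p * X j).vars ⊆ (p * X j).vars ∪ p.vars ∪ {j} := fun i hi => by simp [hi]
      have hjmem : j ∈ (p * X j).vars ∪ p.vars ∪ {j} := by simp
      rw [sum_pderiv_subset _ _ _ hsub3]
      have hsplit : ∀ i, aeval (fun i => g i x) (pderiv i (p * X j)) * g' i
          = (aeval (fun i => g i x) (pderiv i p) * g' i) * g j x
            + aeval (fun i => g i x) (p * pderiv i (X j)) * g' i := by
        intro i
        rw [pderiv_mul, map_add, add_mul, map_mul, aeval_X]
        ring
      rw [Finset.sum_congr rfl fun i _ => hsplit i, Finset.sum_add_distrib, ← Finset.sum_mul,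
        ← sum_pderiv_subset g' _ p hsub1]
      congr 1
      rw [Finset.sum_eq_single_of_mem j hjmem]
      · rw [pderiv_X_self, mul_one]
      · intro i _ hij
        rw [pderiv_X_of_ne (Ne.symm hij), mul_zero, map_zero, zero_mul]

lemma exists_le_of_mem_support_pderiv (i : ℕ) (p : MvPolynomial ℕ ℤ)
    (e : ℕ →₀ ℕ) (he : e ∈ (pderiv i p).support) :
    ∃ d ∈ p.support, ∀ j, e j ≤ d j := by
  classical
  have he' : e ∈ (pderiv i (∑ d ∈ p.support, monomial d (coeff d p))).support := by
    rwa [support_sum_monomial_coeff]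
  rw [map_sum] at he'
  obtain ⟨d, hd, hed⟩ := Finset.mem_biUnion.mp (MvPolynomial.support_sum he')
  refine ⟨d, hd, fun j => ?_⟩
  rw [pderiv_monomial] at hed
  have := support_monomial_subset hed
  rw [Finset.mem_singleton] at this
  subst this
  rw [Finsupp.tsub_apply]
  exact Nat.sub_le _ _

/-- For every `n` there is a polynomial `P` with integer coefficients in the variables
`X 0, …, X (n-1)`, whose term of maximal degree in `X 0` is exactly `(X 0)^n` (i.e. every
monomial of `P - (X 0)^n` has degree `< n` in `X 0`), such that for every real `x` that is not a
nonpositive integer, `Γ⁽ⁿ⁾(x) = Γ(x) · P(Ψ(x), Ψ⁽¹⁾(x), …, Ψ⁽ⁿ⁻¹⁾(x))`. -/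
theorem iteratedDeriv_Gamma_eq_Gamma_mul_poly_digamma (n : ℕ) :
    ∃ P : MvPolynomial ℕ ℤ,
      P.vars ⊆ Finset.range n ∧
      (∀ d ∈ (P - MvPolynomial.X 0 ^ n).support, d 0 < n) ∧
      ∀ x : ℝ, (∀ m : ℕ, x ≠ -(m : ℝ)) →
        iteratedDeriv n Real.Gamma x =
          Real.Gamma x * MvPolynomial.aeval (fun i : ℕ => iteratedDeriv i Digamma x) P := by
  classical
  induction n with
  | zero =>
      refine ⟨1, by simp [vars_one], ?_, ?_⟩
      · intro d hd
        simp at hd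
      · intro x hx
        simp [iteratedDeriv_zero]
  | succ n ih =>
      obtain ⟨P, hvars, hdeg, heval⟩ := ih
      have hPsup : ∀ d ∈ P.support, d 0 ≤ n ∧ ∀ j ∈ d.support, j < n := by
        intro d hd
        refine ⟨?_, fun j hj => Finset.mem_range.mp (hvars ((mem_vars j).mpr ⟨d, hd, hj⟩))⟩
        by_cases hd' : d ∈ (P - X 0 ^ n).support
        · exact le_of_lt (hdeg d hd')
        · have h1 : coeff d (P - X 0 ^ n) = 0 := notMem_support_iff.mp hd'
          rw [coeff_sub, sub_eq_zero] at h1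
          have h2 : d ∈ (X (0 : ℕ) ^ n : MvPolynomial ℕ ℤ).support := by
            rw [mem_support_iff, ← h1]
            exact mem_support_iff.mp hd
          rw [X_pow_eq_monomial] at h2
          have h3 := support_monomial_subset h2
          rw [Finset.mem_singleton] at h3
          subst h3
          simp
      have hsub_supp : ∀ e ∈ (P - X 0 ^ n).support, ∀ j ∈ e.support, j = 0 ∨ j < n := by
        intro e he j hj
        by_cases heP : e ∈ P.support
        · exact Or.inr ((hPsup e heP).2 j hj)
        · have h1 : coeff e P = 0 := notMem_support_iff.mp heP
          have h2 : e ∈ (X (0 : ℕ) ^ n : MvPolynomial ℕ ℤ).support := by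
            rw [mem_support_iff] at he ⊢
            intro hc
            apply he
            rw [coeff_sub, h1, hc, sub_zero]
          rw [X_pow_eq_monomial] at h2
          have h3 := support_monomial_subset h2
          rw [Finset.mem_singleton] at h3
          subst h3
          have h4 := Finsupp.support_single_subset hj
          rw [Finset.mem_singleton] at h4
          exact Or.inl h4
      set R : MvPolynomial ℕ ℤ :=
        X 0 * (P - X 0 ^ n) + ∑ i ∈ Finset.range n, pderiv i P * X (i + 1) with hR
      have hRsup : ∀ d ∈ R.support, d 0 ≤ n ∧ ∀ j ∈ d.support, j < n + 1 := by
        intro d hd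
        rcases Finset.mem_union.mp (support_add hd) with h | h
        · rw [support_X_mul] at h
          obtain ⟨e, he, rfl⟩ := Finset.mem_map.mp h
          have he0 : e 0 < n := hdeg e he
          constructor
          · show ((Finsupp.single 0 1 + e : ℕ →₀ ℕ)) 0 ≤ n
            rw [Finsupp.add_apply, Finsupp.single_eq_same]
            omega
          · intro j hj
            have hj' : (Finsupp.single (0 : ℕ) 1) j + e j ≠ 0 := by
              simpa [Finsupp.add_apply] using Finsupp.mem_support_iff.mp hj
            by_cases hj0 : j = 0
            · omega
            · have : e j ≠ 0 := by
                rw [Finsupp.single_apply] at hj'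
                simp only [Ne.symm hj0, if_false, zero_add] at hj'
                exact hj'
              rcases hsub_supp e he j (Finsupp.mem_support_iff.mpr this) with h' | h'
              · exact absurd h' hj0
              · omega
        · obtain ⟨i, hi, hdi⟩ := Finset.mem_biUnion.mp (MvPolynomial.support_sum h)
          rw [support_mul_X] at hdi
          obtain ⟨e, he, rfl⟩ := Finset.mem_map.mp hdi
          obtain ⟨f, hf, hef⟩ := exists_le_of_mem_support_pderiv i P e he
          have hi' : i < n := Finset.mem_range.mp hi
          have hf0 : f 0 ≤ n := (hPsup f hf).1
          constructor
          · show ((e + Finsupp.single (i + 1) 1 : ℕ →₀ ℕ)) 0 ≤ n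
            rw [Finsupp.add_apply, Finsupp.single_apply]
            have := hef 0
            simp only [Nat.succ_ne_zero, if_false]
            omega
          · intro j hj
            have hj' : e j + (Finsupp.single (i + 1) 1) j ≠ 0 := by
              simpa [Finsupp.add_apply] using Finsupp.mem_support_iff.mp hj
            by_cases hji : j = i + 1
            · omega
            · have hej : e j ≠ 0 := by
                rw [Finsupp.single_apply] at hj'
                simp only [Ne.symm hji, if_false, add_zero] at hj'
                exact hj'
              have hfj : j ∈ f.support := by
                have := hef j
                exact Finsupp.mem_support_iff.mpr (by omega)
              exact Nat.lt_succ_of_lt ((hPsup f hf).2 j hfj)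
      refine ⟨X 0 ^ (n + 1) + R, ?_, ?_, ?_⟩
      · intro j hj
        obtain ⟨d, hd, hjd⟩ := (mem_vars j).mp hj
        rw [Finset.mem_range]
        rcases Finset.mem_union.mp (support_add hd) with h | h
        · rw [X_pow_eq_monomial] at h
          have h3 := support_monomial_subset h
          rw [Finset.mem_singleton] at h3
          subst h3
          have h4 := Finsupp.support_single_subset hjd
          rw [Finset.mem_singleton] at h4
          omega
        · exact (hRsup d h).2 j hjd
      · have hQR : X 0 ^ (n + 1) + R - X 0 ^ (n + 1) = R := by ring
        rw [hQR]
        intro d hd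
        exact Nat.lt_succ_of_le (hRsup d hd).1
      · intro x hx
        have hxS : x ∈ Sset := hx
        have hgd : ∀ i, HasDerivAt (iteratedDeriv i Digamma)
            (iteratedDeriv (i + 1) Digamma x) x := by
          intro i
          have h1 := ((analyticOnNhd_iteratedDeriv_Digamma i) x hxS).differentiableAt.hasDerivAt
          rwa [← iteratedDeriv_succ] at h1
        have hΓx : Real.Gamma x ≠ 0 := Real.Gamma_ne_zero hx
        have hΓd : HasDerivAt Real.Gamma (Real.Gamma x * Digamma x) x := by
          have h1 := ((analyticOnNhd_Gamma x hxS).differentiableAt).hasDerivAt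
          have h2 : Real.Gamma x * Digamma x = deriv Real.Gamma x := by
            rw [Digamma]
            field_simp
          rwa [h2]
        have hF := hΓd.mul
          (aeval_hasDerivAt (fun i => iteratedDeriv i Digamma)
            (fun i => iteratedDeriv (i + 1) Digamma x) x hgd P)
        have hev : iteratedDeriv n Real.Gamma =ᶠ[nhds x]
            fun y => Real.Gamma y * aeval (fun i => iteratedDeriv i Digamma y) P := by
          filter_upwards [isOpen_S.mem_nhds hxS] with y hy
          exact heval y hy
        rw [iteratedDeriv_succ, hev.deriv_eq, (show HasDerivAt (fun y => Real.Gamma y * aeval (fun i => iteratedDeriv i Digamma y) P) _ x from hF).deriv]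
        have hQeq : X 0 ^ (n + 1) + R
            = X 0 * P + ∑ i ∈ Finset.range n, pderiv i P * X (i + 1) := by
          rw [hR]; ring
        rw [hQeq,
          sum_pderiv_subset (fun i => iteratedDeriv (i + 1) Digamma x)
            (fun i => iteratedDeriv i Digamma x) P hvars]
        simp only [map_add, map_mul, map_sum, aeval_X, iteratedDeriv_zero]
        ring
end

section
/- For n ≥ 0 let Q_n(z) = Σ_{k=0}^n (−1)^{n−k} · C(2n−k, n) · z^k/k!, where C(·,·) denotes the binomial coefficient. Then for every z ∈ ℂ and every x ∈ ℂ with |x| < 1/4, the series Σ_{n=0}^∞ Q_n(z) x^n converges and Σ_{n=0}^∞ Q_n(z) x^n = e^{−z/2} · (1+4x)^{−1/2} · e^{(z/2)(1+4x)^{1/2}}, where (1+4x)^{1/2} denotes the principal branch of the square root (which is well defined since Re(1+4x) > 0). -/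
/-- The denominator `Q_n(z) = ∑_{k=0}^n (−1)^{n−k} C(2n−k, n) z^k/k!` of the diagonal Padé
approximant to `e^z`. -/
noncomputable def padeQ (n : ℕ) (z : ℂ) : ℂ :=
  ∑ k ∈ Finset.range (n + 1),
    (-1 : ℂ) ^ (n - k) * (Nat.choose (2 * n - k) n : ℂ) * z ^ k / (Nat.factorial k : ℂ)

open Complex Finset

namespace PadeAux

lemma choose_le_two_pow' (n k : ℕ) : n.choose k ≤ 2 ^ n := by
  rcases le_or_gt k n with h | h
  · calc n.choose k ≤ ∑ i ∈ Finset.range (n+1), n.choose i :=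
        Finset.single_le_sum (f := fun i => n.choose i) (fun i _ => Nat.zero_le _)
          (Finset.mem_range.mpr (by omega))
    _ = 2 ^ n := Nat.sum_range_choose n
  · simp [Nat.choose_eq_zero_of_lt h]

lemma norm_term_le (k m : ℕ) (t : ℂ) :
    ‖(((2*m+k).choose m : ℂ)) * t ^ m‖ ≤ (2:ℝ)^k * (4 * ‖t‖)^m := by
  rw [norm_mul, norm_pow, Complex.norm_natCast]
  have h1 : ((2*m+k).choose m : ℝ) ≤ (2:ℝ)^k * 4^m := by
    have := choose_le_two_pow' (2*m+k) m
    have h2 : ((2*m+k).choose m : ℝ) ≤ ((2:ℕ)^(2*m+k) : ℝ) := by exact_mod_cast this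
    calc ((2*m+k).choose m : ℝ) ≤ ((2:ℕ)^(2*m+k) : ℝ) := h2
      _ = (2:ℝ)^k * 4^m := by
          push_cast
          rw [pow_add, pow_mul]
          norm_num
          ring
  calc ((2*m+k).choose m : ℝ) * ‖t‖ ^ m ≤ ((2:ℝ)^k * 4^m) * ‖t‖ ^ m := by
        apply mul_le_mul_of_nonneg_right h1 (by positivity)
    _ = (2:ℝ)^k * (4 * ‖t‖)^m := by rw [mul_pow]; ring

lemma summable_S (k : ℕ) {t : ℂ} (ht : ‖t‖ < 1/4) :
    Summable (fun m : ℕ => (((2*m+k).choose m : ℂ)) * t ^ m) := by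
  apply Summable.of_norm
  apply Summable.of_nonneg_of_le (fun m => norm_nonneg _) (fun m => norm_term_le k m t)
  apply Summable.mul_left
  exact summable_geometric_of_lt_one (by positivity) (by linarith)

/-- Generating function of the central binomial coefficients. -/
noncomputable def cbf : ℂ → ℂ := fun t => ∑' m : ℕ, ((2*m).choose m : ℂ) * t ^ m

lemma hasSum_cbf {t : ℂ} (ht : ‖t‖ < 1/4) :
    HasSum (fun m : ℕ => ((2*m).choose m : ℂ) * t ^ m) (cbf t) := by
  have h := (summable_S 0 ht).hasSum
  simpa [cbf] using h

lemma summable_deriv_bound {ρ : ℝ} (hρ0 : 0 < ρ) (hρ : ρ < 1/4) :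
    Summable (fun m : ℕ => (m:ℝ) * (4*ρ)^m / ρ) := by
  have h : Summable (fun m : ℕ => (m:ℝ)^1 * (4*ρ)^m) := by
    apply summable_pow_mul_geometric_of_norm_lt_one
    rw [Real.norm_eq_abs, abs_of_pos (by positivity)]
    linarith
  simpa [div_eq_mul_inv] using h.mul_right ρ⁻¹

lemma norm_deriv_term_le {ρ : ℝ} (hρ0 : 0 < ρ) {y : ℂ} (hy : ‖y‖ ≤ ρ) (m : ℕ) :
    ‖((2*m).choose m : ℂ) * ((m:ℂ) * y^(m-1))‖ ≤ (m:ℝ) * (4*ρ)^m / ρ := by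
  rcases Nat.eq_zero_or_pos m with rfl | hm
  · simp
  rw [norm_mul, norm_mul, norm_pow, Complex.norm_natCast, Complex.norm_natCast]
  have hC : ((2*m).choose m : ℝ) ≤ (4:ℝ)^m := by
    have := choose_le_two_pow' (2*m) m
    have h2 : ((2*m).choose m : ℝ) ≤ ((2:ℕ)^(2*m) : ℝ) := by exact_mod_cast this
    calc ((2*m).choose m : ℝ) ≤ ((2:ℕ)^(2*m) : ℝ) := h2
      _ = (4:ℝ)^m := by push_cast; rw [pow_mul]; norm_num
  have hyρ : ‖y‖ ^ (m-1) ≤ ρ^(m-1) := by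
    apply pow_le_pow_left₀ (norm_nonneg y) hy
  have habs : (0:ℝ) ≤ ‖y‖ ^ (m-1) := by positivity
  calc ((2*m).choose m : ℝ) * ((m:ℝ) * ‖y‖ ^ (m-1))
      ≤ (4:ℝ)^m * ((m:ℝ) * ρ^(m-1)) := by
        apply mul_le_mul hC (by apply mul_le_mul_of_nonneg_left hyρ (by positivity))
          (by positivity) (by positivity)
    _ = (m:ℝ) * (4*ρ)^m / ρ := by
        obtain ⟨j, rfl⟩ : ∃ j, m = j + 1 := ⟨m-1, by omega⟩
        have hρne : ρ ≠ 0 := ne_of_gt hρ0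
        rw [mul_pow, pow_succ, Nat.add_sub_cancel]
        field_simp
        ring

lemma hasDerivAt_cbf {t : ℂ} (ht : ‖t‖ < 1/4) :
    HasDerivAt cbf (∑' m : ℕ, ((2*m).choose m : ℂ) * ((m:ℂ) * t ^ (m-1))) t := by
  set ρ : ℝ := (‖t‖ + 1/4)/2 with hρdef
  have h0 : 0 ≤ ‖t‖ := norm_nonneg t
  have hρ0 : 0 < ρ := by rw [hρdef]; linarith
  have hρ : ρ < 1/4 := by rw [hρdef]; linarith
  have htρ : ‖t‖ < ρ := by rw [hρdef]; linarith
  have hmem : ∀ y : ℂ, y ∈ Metric.ball (0:ℂ) ρ ↔ ‖y‖ < ρ := by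
    intro y; rw [Metric.mem_ball, dist_zero_right]
  apply hasDerivAt_tsum_of_isPreconnected (summable_deriv_bound hρ0 hρ)
    Metric.isOpen_ball (convex_ball (0:ℂ) ρ).isPreconnected
    (fun m y _ => (hasDerivAt_pow m y).const_mul (((2*m).choose m : ℂ)))
    (fun m y hy => norm_deriv_term_le hρ0 (le_of_lt ((hmem y).mp hy)) m)
    ((hmem t).mpr htρ)
    (by simpa using (summable_S 0 ht))
    ((hmem t).mpr htρ)

lemma summable_deriv {t : ℂ} (ht : ‖t‖ < 1/4) :
    Summable (fun m : ℕ => ((2*m).choose m : ℂ) * ((m:ℂ) * t ^ (m-1))) := by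
  set ρ : ℝ := (‖t‖ + 1/4)/2 with hρdef
  have h0 : 0 ≤ ‖t‖ := norm_nonneg t
  have hρ0 : 0 < ρ := by rw [hρdef]; linarith
  have hρ : ρ < 1/4 := by rw [hρdef]; linarith
  have htρ : ‖t‖ ≤ ρ := by rw [hρdef]; linarith
  apply Summable.of_norm
  exact Summable.of_nonneg_of_le (fun m => norm_nonneg _)
    (fun m => norm_deriv_term_le hρ0 htρ m) (summable_deriv_bound hρ0 hρ)

lemma succ_mul_choose_succ (m : ℕ) :
    ((m:ℂ)+1) * ((2*(m+1)).choose (m+1) : ℂ) = 2*(2*(m:ℂ)+1) * ((2*m).choose m : ℂ) := by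
  have h := Nat.succ_mul_centralBinom_succ m
  have h' : (m+1) * ((2*(m+1)).choose (m+1)) = 2*(2*m+1) * ((2*m).choose m) := h
  exact_mod_cast congrArg (Nat.cast (R := ℂ)) h'

lemma deriv_rel {t : ℂ} (ht : ‖t‖ < 1/4) :
    (1 - 4*t) * (∑' m : ℕ, ((2*m).choose m : ℂ) * ((m:ℂ) * t ^ (m-1))) = 2 * cbf t := by
  set D := ∑' m : ℕ, ((2*m).choose m : ℂ) * ((m:ℂ) * t ^ (m-1)) with hD
  have hDsum : HasSum (fun m : ℕ => ((2*m).choose m : ℂ) * ((m:ℂ) * t ^ (m-1))) D :=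
    (summable_deriv ht).hasSum
  have h1 : HasSum (fun m : ℕ => ((2*(m+1)).choose (m+1) : ℂ) * (((m:ℂ)+1) * t ^ m)) D := by
    have := (hasSum_nat_add_iff' (f := fun m : ℕ => ((2*m).choose m : ℂ) * ((m:ℂ) * t ^ (m-1)))
      (g := D) 1).mpr hDsum
    simpa using this
  have h3 : HasSum (fun m : ℕ => (m:ℂ) * ((2*m).choose m : ℂ) * t ^ m) (t * D) := by
    have := hDsum.mul_left t
    have heq : (fun m : ℕ => t * (((2*m).choose m : ℂ) * ((m:ℂ) * t ^ (m-1))))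
        = fun m : ℕ => (m:ℂ) * ((2*m).choose m : ℂ) * t ^ m := by
      funext m
      rcases Nat.eq_zero_or_pos m with rfl | hm
      · simp
      · obtain ⟨j, rfl⟩ : ∃ j, m = j + 1 := ⟨m-1, by omega⟩
        rw [Nat.add_sub_cancel, pow_succ]
        ring
    rwa [heq] at this
  have h4 : HasSum (fun m : ℕ => 4*((m:ℂ) * ((2*m).choose m : ℂ) * t ^ m)
      + 2*(((2*m).choose m : ℂ) * t ^ m)) (4*(t*D) + 2*cbf t) :=
    (h3.mul_left 4).add ((hasSum_cbf ht).mul_left 2)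
  have h5 : (fun m : ℕ => ((2*(m+1)).choose (m+1) : ℂ) * (((m:ℂ)+1) * t ^ m))
      = fun m : ℕ => 4*((m:ℂ) * ((2*m).choose m : ℂ) * t ^ m)
      + 2*(((2*m).choose m : ℂ) * t ^ m) := by
    funext m
    have := succ_mul_choose_succ m
    linear_combination (t ^ m) * this
  rw [h5] at h1
  have hu : D = 4*(t*D) + 2*cbf t := h1.unique h4
  linear_combination hu

lemma slit_mem {y : ℂ} (hy : ‖y‖ < 1/4) : (1 - 4*y) ∈ Complex.slitPlane := by
  rw [Complex.mem_slitPlane_iff]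
  left
  have h1 : y.re ≤ ‖y‖ := Complex.re_le_norm y
  simp only [Complex.sub_re, Complex.one_re, Complex.mul_re, Complex.ofReal_re]
  norm_num
  nlinarith [norm_nonneg y]

lemma cbf_zero : cbf 0 = 1 := by
  rw [cbf, tsum_eq_single 0 (fun m hm => by simp [zero_pow hm])]
  simp

lemma cbf_eq {t : ℂ} (ht : ‖t‖ < 1/4) : cbf t = (1 - 4*t) ^ (-(1:ℂ)/2) := by
  have habs : ∀ y : ℂ, y ∈ Metric.ball (0:ℂ) (1/4 : ℝ) ↔ ‖y‖ < 1/4 := by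
    intro y; rw [Metric.mem_ball, dist_zero_right]
  set h : ℂ → ℂ := fun y => cbf y * (1-4*y)^((1:ℂ)/2) with hh
  have hd : ∀ y ∈ Metric.ball (0:ℂ) (1/4 : ℝ), HasDerivAt h 0 y := by
    intro y hy
    have hy' : ‖y‖ < 1/4 := (habs y).mp hy
    have hne : (1:ℂ) - 4*y ≠ 0 := Complex.slitPlane_ne_zero (slit_mem hy')
    have hlin : HasDerivAt (fun y : ℂ => 1 - 4*y) (-4) y := by
      simpa using ((hasDerivAt_id y).const_mul (4:ℂ)).const_sub 1
    have h2 := hlin.cpow_const (c := (1:ℂ)/2) (slit_mem hy')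
    have h3 := (hasDerivAt_cbf hy').mul h2
    have hsplit : ((1:ℂ)-4*y)^((1:ℂ)/2) = (1-4*y) * (1-4*y)^((1:ℂ)/2 - 1) := by
      have e1 : ((1:ℂ)/2) = 1 + ((1:ℂ)/2 - 1) := by ring
      nth_rewrite 1 [e1]
      rw [Complex.cpow_add _ _ hne, Complex.cpow_one]
    have hrel := deriv_rel hy'
    refine h3.congr_deriv ?_
    rw [hsplit]
    linear_combination ((1-4*y)^((1:ℂ)/2 - 1)) * hrel
  have hconst : h t = h 0 := by
    apply Convex.is_const_of_fderivWithin_eq_zero (convex_ball (0:ℂ) (1/4:ℝ))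
      (fun y hy => (hd y hy).differentiableAt.differentiableWithinAt)
      ?_ ((habs t).mpr ht) ((habs 0).mpr (by norm_num))
    intro y hy
    rw [fderivWithin_of_isOpen Metric.isOpen_ball hy, (hd y hy).hasFDerivAt.fderiv]
    ext
    simp
  have h0 : h 0 = 1 := by
    rw [hh]
    simp [cbf_zero, Complex.one_cpow]
  have hkey : cbf t * (1-4*t)^((1:ℂ)/2) = 1 := by
    have h' := hconst.trans h0
    simpa [hh] using h'
  have hne : ((1:ℂ)-4*t)^((1:ℂ)/2) ≠ 0 := by
    rw [Ne, Complex.cpow_eq_zero_iff]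
    push_neg
    intro hcon
    exact absurd hcon (Complex.slitPlane_ne_zero (slit_mem ht))
  have : cbf t = (((1:ℂ)-4*t)^((1:ℂ)/2))⁻¹ := by
    field_simp at hkey ⊢
    linear_combination hkey
  rw [this, ← Complex.cpow_neg]
  norm_num

lemma choose_central_succ (m : ℕ) : (2*m+2).choose (m+1) = 2 * ((2*m+1).choose m) := by
  have h1 : (2*m+2).choose (m+1) = (2*m+1).choose m + (2*m+1).choose (m+1) :=
    Nat.choose_succ_succ (2*m+1) m
  have h := Nat.choose_symm (show m+1 ≤ 2*m+1 by omega)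
  rw [show 2*m+1-(m+1) = m from by omega] at h
  omega

lemma choose_pascal (k m : ℕ) :
    (2*(m+1)+(k+1)).choose (m+1) = (2*m+(k+2)).choose m + (2*(m+1)+k).choose (m+1) := by
  rw [show 2*(m+1)+(k+1) = (2*m+k+2)+1 from by ring, show 2*(m+1)+k = (2*m+k+2) from by ring,
    show 2*m+(k+2) = 2*m+k+2 from by ring]
  exact Nat.choose_succ_succ _ m

lemma h14ax (x : ℂ) (hx : ‖x‖ < 1/4) : (1:ℂ) + 4*x ≠ 0 := by
  intro hcon
  have h4 : ‖(4:ℂ)*x‖ = 1 := by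
    have he : (4:ℂ)*x = -1 := by linear_combination hcon
    rw [he]; simp
  rw [norm_mul] at h4
  simp only [Complex.norm_ofNat] at h4
  nlinarith

lemma key (x : ℂ) (hx : ‖x‖ < 1/4) (hx0 : x ≠ 0) (k : ℕ) :
    HasSum (fun m : ℕ => (((2*m+k).choose m : ℂ)) * (-x) ^ m)
      ((1+4*x)^(-(1:ℂ)/2) * (((1+4*x)^((1:ℂ)/2) - 1)/(2*x))^k) := by
  set w : ℂ := (1+4*x)^((1:ℂ)/2) with hw
  set B : ℂ := (1+4*x)^(-(1:ℂ)/2) with hB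
  set c : ℂ := (w - 1)/(2*x) with hc
  have hxabs : ‖(-x)‖ < 1/4 := by rwa [norm_neg]
  have h14 : (1:ℂ) + 4*x ≠ 0 := h14ax x hx
  have hw2 : w * w = 1 + 4*x := by
    rw [hw, ← Complex.cpow_add _ _ h14]
    norm_num
  have hBw : B * w = 1 := by
    rw [hB, hw, ← Complex.cpow_add _ _ h14]
    norm_num
  have h2x : 2*x*c = w - 1 := by rw [hc]; field_simp
  clear_value w B c
  have hkey2 : -x * (c*c) = c - 1 := by
    have h4x : (4:ℂ)*x ≠ 0 := by simpa using hx0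
    apply mul_left_cancel₀ h4x
    linear_combination (-(2*x*c + w + 1))*h2x - hw2
  -- base case 0
  have P0 : HasSum (fun m : ℕ => (((2*m+0).choose m : ℂ)) * (-x) ^ m) (B * c^0) := by
    have h := hasSum_cbf hxabs
    have he : (1:ℂ) - 4*(-x) = 1 + 4*x := by ring
    have hc0 : cbf (-x) = B := by rw [cbf_eq hxabs, he, hB]
    rw [hc0] at h
    simpa using h
  -- base case 1
  have P1 : HasSum (fun m : ℕ => (((2*m+1).choose m : ℂ)) * (-x) ^ m) (B * c^1) := by
    have h1 := (hasSum_nat_add_iff'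
      (f := fun m : ℕ => (((2*m+0).choose m : ℂ)) * (-x) ^ m) (g := B * c^0) 1).mpr P0
    have he : (fun m : ℕ => (((2*(m+1)+0).choose (m+1) : ℂ)) * (-x) ^ (m+1))
        = fun m : ℕ => (2*(-x)) * ((((2*m+1).choose m : ℂ)) * (-x) ^ m) := by
      funext m
      have hn : ((2*(m+1)+0).choose (m+1) : ℂ) = 2 * (((2*m+1).choose m : ℂ)) := by
        have := choose_central_succ m
        rw [show 2*(m+1)+0 = 2*m+2 from by ring]
        exact_mod_cast congrArg (Nat.cast (R := ℂ)) this
      rw [hn, pow_succ]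
      ring
    rw [he] at h1
    simp only [Finset.range_one, Finset.sum_singleton, Nat.choose_self] at h1
    have h2 := h1.mul_left ((2*(-x))⁻¹)
    have hne2x : (2*(-x)) ≠ 0 := by simpa using hx0
    have he2 : (fun m : ℕ => (2*(-x))⁻¹ * ((2*(-x)) * ((((2*m+1).choose m : ℂ)) * (-x) ^ m)))
        = fun m : ℕ => (((2*m+1).choose m : ℂ)) * (-x) ^ m := by
      funext m
      rw [inv_mul_cancel_left₀ hne2x]
    rw [he2] at h2
    suffices hs : B * c^1 = (2*(-x))⁻¹ * (B * c^0 - ((1:ℕ):ℂ) * (-x)^0) by rwa [hs]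
    have hgoal : (2*(-x)) * (B * c^1) = (B * c^0 - (1 * (-x)^0 : ℂ)) := by
      simp only [pow_one, pow_zero, mul_one]
      linear_combination (-B) * h2x - hBw
    rw [eq_inv_mul_iff_mul_eq₀ hne2x]
    linear_combination hgoal
  -- inductive step
  have step : ∀ k : ℕ,
      HasSum (fun m : ℕ => (((2*m+k).choose m : ℂ)) * (-x) ^ m) (B * c^k) →
      HasSum (fun m : ℕ => (((2*m+(k+1)).choose m : ℂ)) * (-x) ^ m) (B * c^(k+1)) →
      HasSum (fun m : ℕ => (((2*m+(k+2)).choose m : ℂ)) * (-x) ^ m) (B * c^(k+2)) := by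
    intro k ihk ihk1
    have hd : HasSum (fun m : ℕ => (((2*m+(k+1)).choose m : ℂ)) * (-x) ^ m
        - (((2*m+k).choose m : ℂ)) * (-x) ^ m) (B * c^(k+1) - B * c^k) := ihk1.sub ihk
    have h1 := (hasSum_nat_add_iff' (g := B * c^(k+1) - B * c^k) 1).mpr hd
    have he : (fun m : ℕ => ((((2*(m+1)+(k+1)).choose (m+1) : ℂ)) * (-x) ^ (m+1)
        - (((2*(m+1)+k).choose (m+1) : ℂ)) * (-x) ^ (m+1)))
        = fun m : ℕ => (-x) * ((((2*m+(k+2)).choose m : ℂ)) * (-x) ^ m) := by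
      funext m
      have hn := choose_pascal k m
      have hn' : ((2*(m+1)+(k+1)).choose (m+1) : ℂ)
          = ((2*m+(k+2)).choose m : ℂ) + ((2*(m+1)+k).choose (m+1) : ℂ) := by
        exact_mod_cast congrArg (Nat.cast (R := ℂ)) hn
      rw [pow_succ]
      linear_combination ((-x)^m * (-x)) * hn'
    rw [he] at h1
    simp only [Finset.range_one, Finset.sum_singleton, Nat.choose_zero_right, pow_zero,
      Nat.cast_one, one_mul, sub_self, sub_zero] at h1
    have hxne : (-x) ≠ 0 := neg_ne_zero.mpr hx0
    have h2 := h1.mul_left ((-x)⁻¹)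
    have he2 : (fun m : ℕ => (-x)⁻¹ * ((-x) * ((((2*m+(k+2)).choose m : ℂ)) * (-x) ^ m)))
        = fun m : ℕ => (((2*m+(k+2)).choose m : ℂ)) * (-x) ^ m := by
      funext m
      rw [inv_mul_cancel_left₀ hxne]
    rw [he2] at h2
    have hfin : B*c^(k+1) - B*c^k = -x * (B * c^(k+2)) := by
      linear_combination (-(B*c^k))*hkey2
    rwa [hfin, inv_mul_cancel_left₀ hxne] at h2
  induction k using Nat.twoStepInduction with
  | zero => exact P0
  | one => exact P1
  | more k ih0 ih1 => exact step k ih0 ih1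

/-- The summand of the double series. -/
noncomputable def gfun (z x : ℂ) : ℕ × ℕ → ℂ := fun p =>
  z ^ p.1 / (Nat.factorial p.1) * x ^ p.1 * (((2 * p.2 + p.1).choose p.2 : ℂ) * (-x) ^ p.2)

lemma summable_norm_gfun (z x : ℂ) (hx : ‖x‖ < 1 / 4) :
    Summable (fun p : ℕ × ℕ => ‖gfun z x p‖) := by
  have hF : Summable (fun k : ℕ => (2*‖z‖*‖x‖)^k / (Nat.factorial k)) :=
    Real.summable_pow_div_factorial _
  have hG : Summable (fun m : ℕ => (4*‖x‖)^m) :=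
    summable_geometric_of_lt_one (by positivity) (by linarith)
  have hFG := hF.mul_of_nonneg hG (fun k => by positivity) (fun m => by positivity)
  have hb : ∀ p : ℕ × ℕ, ‖gfun z x p‖
      ≤ (2*‖z‖*‖x‖)^p.1 / (Nat.factorial p.1) * (4*‖x‖)^p.2 := by
    intro p
    rw [gfun, norm_mul]
    have hb1 : ‖z^p.1 / ((Nat.factorial p.1) : ℂ) * x^p.1‖
        = (‖z‖ * ‖x‖)^p.1 / (Nat.factorial p.1) := by
      rw [norm_mul, norm_div, norm_pow, norm_pow, Complex.norm_natCast, mul_pow]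
      ring
    rw [hb1]
    have hb2 := norm_term_le p.1 p.2 (-x)
    rw [norm_neg] at hb2
    calc (‖z‖ * ‖x‖)^p.1 / (Nat.factorial p.1)
          * ‖(((2*p.2+p.1).choose p.2 : ℂ)) * (-x) ^ p.2‖
        ≤ (‖z‖ * ‖x‖)^p.1 / (Nat.factorial p.1)
          * ((2:ℝ)^p.1 * (4 * ‖x‖)^p.2) := by
          apply mul_le_mul_of_nonneg_left hb2 (by positivity)
      _ = (2*‖z‖*‖x‖)^p.1 / (Nat.factorial p.1) * (4*‖x‖)^p.2 := by
          rw [mul_pow, mul_pow]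
          ring
  exact Summable.of_nonneg_of_le (fun p => norm_nonneg _) hb hFG

end PadeAux

open PadeAux in
set_option maxHeartbeats 1000000 in
/-- Generating function of the Padé denominators: for `|x| < 1/4`,
`∑ Q_n(z) xⁿ = e^{−z/2} (1+4x)^{−1/2} e^{(z/2)(1+4x)^{1/2}}` (principal branch powers). -/
theorem padeQ_generating_function (z x : ℂ) (hx : ‖x‖ < 1 / 4) :
    HasSum (fun n : ℕ => padeQ n z * x ^ n)
      (Complex.exp (-z / 2) * (1 + 4 * x) ^ (-(1 : ℂ) / 2) *
        Complex.exp (z / 2 * (1 + 4 * x) ^ ((1 : ℂ) / 2))) := by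
  rcases eq_or_ne x 0 with rfl | hx0
  · have hrhs : Complex.exp (-z / 2) * ((1:ℂ) + 4 * 0) ^ (-(1 : ℂ) / 2) *
        Complex.exp (z / 2 * ((1:ℂ) + 4 * 0) ^ ((1 : ℂ) / 2)) = 1 := by
      norm_num [Complex.one_cpow, ← Complex.exp_add]
      rw [show -z/2 + z/2 = 0 from by ring, Complex.exp_zero]
    rw [hrhs]
    have := hasSum_single (f := fun n : ℕ => padeQ n z * (0:ℂ) ^ n) 0
      (fun b hb => by simp [zero_pow hb])
    have h1' : padeQ 0 z = 1 := by simp [padeQ]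
    simpa [h1'] using this
  -- main case
  set w : ℂ := (1+4*x)^((1:ℂ)/2) with hw
  set B : ℂ := (1+4*x)^(-(1:ℂ)/2) with hB
  set c : ℂ := (w - 1)/(2*x) with hc
  have h14 : (1:ℂ) + 4*x ≠ 0 := h14ax x hx
  have h2x : 2*x*c = w - 1 := by rw [hc]; field_simp
  clear_value w B c
  have hgsum : Summable (gfun z x) := (summable_norm_gfun z x hx).of_norm
  have hfiber : ∀ k : ℕ, HasSum (fun m : ℕ => gfun z x (k, m))
      ((z^k / (Nat.factorial k) * x^k) * (B * c^k)) := by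
    intro k
    have h := (key x hx hx0 k).mul_left (z^k / (Nat.factorial k) * x^k)
    rw [← hw, ← hB, ← hc] at h
    exact h
  have houter : HasSum (fun k : ℕ => (z^k / (Nat.factorial k) * x^k) * (B * c^k))
      (B * Complex.exp (z/2*w - z/2)) := by
    have he := (NormedSpace.expSeries_div_hasSum_exp (z/2*w - z/2)).mul_left B
    rw [← Complex.exp_eq_exp_ℂ] at he
    have heq : (fun k : ℕ => B * ((z/2*w - z/2)^k / (Nat.factorial k)))
        = fun k : ℕ => (z^k / (Nat.factorial k) * x^k) * (B * c^k) := by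
      funext k
      rw [show z/2*w - z/2 = z*(x*c) from by linear_combination (-(z/2))*h2x, mul_pow z (x*c),
        mul_pow x c]
      ring
    rwa [heq] at he
  have h1 : HasSum (fun k : ℕ => (z^k / (Nat.factorial k) * x^k) * (B * c^k))
      (∑' p, gfun z x p) := hgsum.hasSum.prod_fiberwise hfiber
  have h2 : (∑' p, gfun z x p) = B * Complex.exp (z/2*w - z/2) := h1.unique houter
  have hg' : HasSum (gfun z x) (B * Complex.exp (z/2*w - z/2)) := h2 ▸ hgsum.hasSum
  have hsig : HasSum (fun q : (Σ n : ℕ, Finset.HasAntidiagonal.antidiagonal n) => gfun z x q.2)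
      (B * Complex.exp (z/2*w - z/2)) :=
    (Equiv.hasSum_iff Finset.HasAntidiagonal.sigmaAntidiagonalEquivProd).mpr hg'
  have hreg : HasSum (fun n : ℕ => ∑ p : Finset.HasAntidiagonal.antidiagonal n, gfun z x (p : ℕ × ℕ))
      (B * Complex.exp (z/2*w - z/2)) :=
    hsig.sigma (fun n => hasSum_fintype _)
  have hident : (fun n : ℕ => ∑ p : Finset.HasAntidiagonal.antidiagonal n, gfun z x (p : ℕ × ℕ))
      = fun n : ℕ => padeQ n z * x^n := by
    funext n
    rw [Finset.sum_coe_sort (Finset.HasAntidiagonal.antidiagonal n) (gfun z x),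
      Finset.Nat.sum_antidiagonal_eq_sum_range_succ_mk, padeQ, Finset.sum_mul]
    apply Finset.sum_congr rfl
    intro k hk
    have hkn : k ≤ n := by simpa using Nat.lt_succ_iff.mp (Finset.mem_range.mp hk)
    rw [gfun]
    simp only
    have hc1 : 2*(n-k)+k = 2*n-k := by omega
    have hc2 : (2*n-k).choose (n-k) = (2*n-k).choose n := by
      have h := Nat.choose_symm (show n ≤ 2*n-k by omega)
      rwa [show 2*n-k-n = n-k from by omega] at h
    rw [hc1, hc2, neg_pow]
    have hxx : x ^ k * x^(n-k) = x^n := by rw [← pow_add, Nat.add_sub_cancel' hkn]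
    linear_combination (((-1:ℂ)^(n-k) * ((2*n-k).choose n : ℂ) * z^k) / (Nat.factorial k : ℂ)) * hxx
  rw [hident] at hreg
  have hfinal : B * Complex.exp (z/2*w - z/2)
      = Complex.exp (-z / 2) * B * Complex.exp (z / 2 * w) := by
    rw [sub_eq_add_neg, Complex.exp_add]
    rw [show -z/2 = -(z/2) from by ring]
    ring
  rwa [hfinal] at hreg
end

section
/- Let α be a rational number that is not a nonpositive integer. For integers 0 ≤ k ≤ n set binom(n+α, k+α) = Γ(n+α+1)/(Γ(k+α+1)·(n−k)!) and P_n(α) = Σ_{k=0}^n binom(n+α, k+α)·(−1)^k/(k!·(k+α)). Then for every real z with |z| < 1, the series Σ_{n=0}^∞ P_n(α) z^n converges and equals (1−z)^{−α−1} · Σ_{k=0}^∞ (−z/(1−z))^k / (k!·(k+α)). -/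
open Finset


/-- The generalized binomial coefficient `binom(n+α, k+α) = Γ(n+α+1)/(Γ(k+α+1)·(n−k)!)`. -/
noncomputable def genBinom (α : ℚ) (n k : ℕ) : ℝ :=
  Real.Gamma ((n : ℝ) + (α : ℝ) + 1) /
    (Real.Gamma ((k : ℝ) + (α : ℝ) + 1) * (Nat.factorial (n - k) : ℝ))

/-- `P_n(α) = ∑_{k=0}^n binom(n+α, k+α) (−1)^k/(k!(k+α))`. -/
noncomputable def gammaApprox (α : ℚ) (n : ℕ) : ℝ :=
  ∑ k ∈ Finset.range (n + 1),
    genBinom α n k * (-1 : ℝ) ^ k / ((Nat.factorial k : ℝ) * ((k : ℝ) + (α : ℝ)))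

/-- `dcoef a n = (a)ₙ / n! = (∏_{j<n} (a+j)) / n!`, the coefficients of `(1-x)^{-a}`. -/
noncomputable def dcoef (a : ℝ) (n : ℕ) : ℝ :=
  (∏ j ∈ Finset.range n, (a + j)) / (Nat.factorial n : ℝ)

lemma dcoef_zero (a : ℝ) : dcoef a 0 = 1 := by simp [dcoef]

lemma dcoef_succ (a : ℝ) (n : ℕ) :
    dcoef a (n + 1) * ((n : ℝ) + 1) = dcoef a n * (a + n) := by
  have hn : ((Nat.factorial n : ℝ)) ≠ 0 := Nat.cast_ne_zero.2 n.factorial_ne_zero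
  simp only [dcoef, Finset.prod_range_succ, Nat.factorial_succ, Nat.cast_mul,
    Nat.cast_add, Nat.cast_one]
  field_simp

lemma prod_eq_factorial_div (B : ℕ) (m : ℕ) :
    (∏ j ∈ Finset.range m, ((B : ℝ) + 1 + j)) =
      (Nat.factorial (m + B) : ℝ) / (Nat.factorial B : ℝ) := by
  induction m with
  | zero =>
      simp [div_self (Nat.cast_ne_zero.2 B.factorial_ne_zero : ((Nat.factorial B:ℝ)) ≠ 0)]
  | succ m ih =>
      rw [Finset.prod_range_succ, ih]
      have hB : ((Nat.factorial B : ℝ)) ≠ 0 := Nat.cast_ne_zero.2 B.factorial_ne_zero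
      have : (Nat.factorial (m + 1 + B) : ℝ) = ((m + B : ℕ) + 1) * Nat.factorial (m + B) := by
        rw [show m + 1 + B = (m + B) + 1 by ring, Nat.factorial_succ]
        push_cast
        ring
      rw [this]
      push_cast
      field_simp
      ring

lemma abs_dcoef_le (a : ℝ) (B : ℕ) (hB : |a| ≤ (B : ℝ) + 1) (m : ℕ) :
    |dcoef a m| ≤ ((m + B).choose B : ℝ) := by
  have hfac : (0:ℝ) < (Nat.factorial m : ℝ) := by positivity
  have h1 : |dcoef a m| = (∏ j ∈ Finset.range m, |a + j|) / (Nat.factorial m : ℝ) := by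
    rw [dcoef, abs_div, Finset.abs_prod, abs_of_pos hfac]
  have h2 : (∏ j ∈ Finset.range m, |a + j|) ≤ ∏ j ∈ Finset.range m, ((B : ℝ) + 1 + j) := by
    refine Finset.prod_le_prod (fun j _ => abs_nonneg _) (fun j _ => ?_)
    calc |a + j| ≤ |a| + |(j:ℝ)| := abs_add_le _ _
      _ ≤ ((B:ℝ) + 1) + j := by
          rw [abs_of_nonneg (by positivity : (0:ℝ) ≤ (j:ℝ))]
          linarith
  have h4 : (∏ j ∈ Finset.range m, ((B : ℝ) + 1 + j)) / (Nat.factorial m : ℝ) =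
      ((m + B).choose B : ℝ) := by
    rw [prod_eq_factorial_div, Nat.cast_choose ℝ (Nat.le_add_left B m), Nat.add_sub_cancel,
      div_div]
  rw [h1, ← h4]
  gcongr

lemma summable_choose_real (B : ℕ) {x : ℝ} (hx : |x| < 1) :
    Summable (fun n => ((n + B).choose B : ℝ) * x ^ n) :=
  summable_choose_mul_geometric_of_norm_lt_one B (by rwa [Real.norm_eq_abs])

lemma summable_dcoef (a : ℝ) {x : ℝ} (hx : |x| < 1) :
    Summable (fun n => dcoef a n * x ^ n) := by
  set B := ⌈|a|⌉₊ with hB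
  have hBa : |a| ≤ (B : ℝ) + 1 := le_trans (Nat.le_ceil _) (by linarith)
  refine Summable.of_norm_bounded ((summable_choose_real B (x := |x|) (by rwa [abs_abs])).mul_left 1) (fun n => ?_)
  rw [one_mul, Real.norm_eq_abs, abs_mul, abs_pow]
  exact mul_le_mul_of_nonneg_right (abs_dcoef_le a B hBa n) (by positivity)

lemma summable_dcoef_deriv (a : ℝ) {r : ℝ} (hr0 : 0 < r) (hr : r < 1) :
    Summable (fun n => |dcoef a n| * n * r ^ (n - 1)) := by
  set B := ⌈|a|⌉₊ with hB
  have hBa : |a| ≤ (B : ℝ) + 1 := le_trans (Nat.le_ceil _) (by linarith)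
  have habs : |r| < 1 := by rw [abs_of_pos hr0]; exact hr
  have hsum : Summable (fun n => (((B : ℝ) + 1) / r) * (((n + (B + 1)).choose (B + 1) : ℝ) * r ^ n)) :=
    (summable_choose_real (B + 1) habs).mul_left _
  refine Summable.of_nonneg_of_le (fun n => by positivity) (fun n => ?_) hsum
  match n with
  | 0 => simp; positivity
  | (m + 1) =>
    have key : ((m + 1) : ℝ) * ((m + 1 + B).choose B : ℝ) ≤
        ((B : ℝ) + 1) * ((m + 1 + (B + 1)).choose (B + 1) : ℝ) := by
      have h := Nat.add_one_mul_choose_eq (m + 1 + B) B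
      have h' : (m + 1) * ((m + 1 + B).choose B) ≤
          (B + 1) * ((m + 1 + (B + 1)).choose (B + 1)) := by
        calc (m + 1) * ((m + 1 + B).choose B) ≤ (m + 1 + B + 1) * ((m + 1 + B).choose B) := by
              apply Nat.mul_le_mul_right; omega
          _ = ((m + 1 + B).succ) * ((m + 1 + B).choose B) := rfl
          _ = ((m + 1 + B).succ).choose (B.succ) * B.succ := h
          _ = (B + 1) * ((m + 1 + (B + 1)).choose (B + 1)) := by
              rw [Nat.succ_eq_add_one, Nat.succ_eq_add_one,
                show m + 1 + B + 1 = m + 1 + (B + 1) from by ring]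
              ring
      exact_mod_cast h'
    have hd : |dcoef a (m + 1)| ≤ ((m + 1 + B).choose B : ℝ) := abs_dcoef_le a B hBa (m + 1)
    have hrpow : (0:ℝ) ≤ r ^ m := by positivity
    calc |dcoef a (m + 1)| * ((m + 1 : ℕ) : ℝ) * r ^ (m + 1 - 1)
        = (|dcoef a (m + 1)| * ((m + 1 : ℕ) : ℝ)) * r ^ m := by norm_num
      _ ≤ (((m + 1 + B).choose B : ℝ) * ((m + 1 : ℕ) : ℝ)) * r ^ m := by
          apply mul_le_mul_of_nonneg_right _ hrpow
          exact mul_le_mul_of_nonneg_right hd (by positivity)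
      _ ≤ (((B : ℝ) + 1) * ((m + 1 + (B + 1)).choose (B + 1) : ℝ)) * r ^ m := by
          apply mul_le_mul_of_nonneg_right _ hrpow
          rw [mul_comm (((m + 1 + B).choose B : ℝ))]
          exact_mod_cast key
      _ = ((B : ℝ) + 1) / r * (((m + 1 + (B + 1)).choose (B + 1) : ℝ) * r ^ (m + 1)) := by
          rw [pow_succ]
          field_simp

lemma summable_dcoef_deriv_at (a : ℝ) {y : ℝ} (hy : |y| < 1) :
    Summable (fun n => dcoef a n * ((n : ℝ) * y ^ (n - 1))) := by
  set r : ℝ := (|y| + 1) / 2 with hrdef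
  have hr0 : 0 < r := by positivity
  have hr1 : r < 1 := by rw [hrdef]; linarith
  have hyr : |y| ≤ r := by rw [hrdef]; linarith
  refine Summable.of_norm_bounded (summable_dcoef_deriv a hr0 hr1) (fun n => ?_)
  rw [Real.norm_eq_abs, abs_mul, abs_mul, abs_pow, Nat.abs_cast, ← mul_assoc]
  gcongr

lemma hasDerivAt_dcoef_sum (a : ℝ) {y : ℝ} (hy : |y| < 1) :
    HasDerivAt (fun w => ∑' n, dcoef a n * w ^ n)
      (∑' n, dcoef a n * ((n : ℝ) * y ^ (n - 1))) y := by
  set r : ℝ := (|y| + 1) / 2 with hrdef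
  have hr0 : 0 < r := by positivity
  have hr1 : r < 1 := by rw [hrdef]; linarith
  have hyr : |y| < r := by rw [hrdef]; linarith
  have hyt : y ∈ Set.Ioo (-r) r := by
    rcases abs_lt.1 hyr with ⟨h1, h2⟩; exact ⟨h1, h2⟩
  refine hasDerivAt_tsum_of_isPreconnected
    (g' := fun (n : ℕ) (w : ℝ) => dcoef a n * ((n : ℝ) * w ^ (n - 1)))
    (summable_dcoef_deriv a hr0 hr1) isOpen_Ioo
    ((convex_Ioo _ _).isPreconnected) (fun n w _ => (hasDerivAt_pow n w).const_mul _)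
    (fun n w hw => ?_) hyt (summable_dcoef a hy) hyt
  have hwr : |w| ≤ r := le_of_lt (abs_lt.2 ⟨hw.1, hw.2⟩)
  rw [Real.norm_eq_abs, abs_mul, abs_mul, abs_pow, Nat.abs_cast, ← mul_assoc]
  gcongr

lemma dcoef_key (a : ℝ) {y : ℝ} (hy : |y| < 1) :
    (1 - y) * (∑' n, dcoef a n * ((n : ℝ) * y ^ (n - 1))) =
      a * ∑' n, dcoef a n * y ^ n := by
  set S := ∑' n, dcoef a n * ((n : ℝ) * y ^ (n - 1)) with hSdef
  set F := ∑' n, dcoef a n * y ^ n with hFdef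
  have hs1 : HasSum (fun n => dcoef a n * ((n : ℝ) * y ^ (n - 1))) S :=
    (summable_dcoef_deriv_at a hy).hasSum
  have hf : HasSum (fun n => dcoef a n * y ^ n) F := (summable_dcoef a hy).hasSum
  have hshift : HasSum (fun n : ℕ => dcoef a (n + 1) * (((n + 1 : ℕ) : ℝ) * y ^ (n + 1 - 1)))
      (S - ∑ i ∈ Finset.range 1, dcoef a i * ((i : ℝ) * y ^ (i - 1))) :=
    (hasSum_nat_add_iff' 1).2 hs1
  have hA : HasSum (fun n => dcoef a n * (a + n) * y ^ n) S := by
    have heq : (fun n : ℕ => dcoef a (n + 1) * (((n + 1 : ℕ) : ℝ) * y ^ (n + 1 - 1))) =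
        fun n => dcoef a n * (a + n) * y ^ n := by
      funext n
      have h1 : ((n + 1 : ℕ) : ℝ) = (n : ℝ) + 1 := by push_cast; ring
      have h2 : n + 1 - 1 = n := rfl
      rw [h1, h2]
      calc dcoef a (n + 1) * (((n : ℝ) + 1) * y ^ n)
          = dcoef a (n + 1) * ((n : ℝ) + 1) * y ^ n := by ring
        _ = dcoef a n * (a + n) * y ^ n := by rw [dcoef_succ]
    rw [heq] at hshift
    simpa using hshift
  have hC : HasSum (fun n => dcoef a n * (n : ℝ) * y ^ n) (y * S) := by
    have h := hs1.mul_left y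
    have heq : (fun n : ℕ => y * (dcoef a n * ((n : ℝ) * y ^ (n - 1)))) =
        fun n => dcoef a n * (n : ℝ) * y ^ n := by
      funext n
      match n with
      | 0 => simp
      | (m + 1) =>
        have h2 : m + 1 - 1 = m := rfl
        rw [h2, pow_succ]
        push_cast
        ring
    rwa [heq] at h
  have hD : HasSum (fun n => dcoef a n * (n : ℝ) * y ^ n) (S - a * F) := by
    have h := hA.sub (hf.mul_left a)
    have heq : (fun n : ℕ => dcoef a n * (a + n) * y ^ n - a * (dcoef a n * y ^ n)) =
        fun n => dcoef a n * (n : ℝ) * y ^ n := by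
      funext n; ring
    rwa [heq] at h
  have huniq : y * S = S - a * F := hC.unique hD
  linarith

lemma hasSum_dcoef_rpow (a : ℝ) {x : ℝ} (hx : |x| < 1) :
    HasSum (fun n => dcoef a n * x ^ n) ((1 - x) ^ (-a)) := by
  have hx1 : x ∈ Set.Ioo (-1 : ℝ) 1 := by
    rcases abs_lt.1 hx with ⟨h1, h2⟩; exact ⟨h1, h2⟩
  have hderiv : ∀ y ∈ Set.Ioo (-1 : ℝ) 1,
      HasDerivAt (fun w => (∑' n, dcoef a n * w ^ n) * (1 - w) ^ a) 0 y := by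
    intro y hy
    have hy1 : |y| < 1 := abs_lt.2 ⟨hy.1, hy.2⟩
    have h1y : (0 : ℝ) < 1 - y := by linarith [hy.2]
    have hfd := hasDerivAt_dcoef_sum a hy1
    have hbase : HasDerivAt (fun w : ℝ => 1 - w) (-1) y := (hasDerivAt_id y).const_sub 1
    have hrpow : HasDerivAt (fun w : ℝ => (1 - w) ^ a) (a * (1 - y) ^ (a - 1) * (-1)) y :=
      (Real.hasDerivAt_rpow_const (Or.inl h1y.ne')).comp y hbase
    have hmul := hfd.mul hrpow
    have hz : (∑' n, dcoef a n * ((n : ℝ) * y ^ (n - 1))) * (1 - y) ^ a +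
        (∑' n, dcoef a n * y ^ n) * (a * (1 - y) ^ (a - 1) * (-1)) = 0 := by
      have hk := dcoef_key a hy1
      have hpa : (1 - y) ^ a = (1 - y) ^ (a - 1) * (1 - y) := by
        rw [show (1 - y) ^ a = (1 - y) ^ ((a - 1) + 1) by norm_num,
          Real.rpow_add h1y, Real.rpow_one]
      rw [hpa]
      calc (∑' n, dcoef a n * ((n : ℝ) * y ^ (n - 1))) * ((1 - y) ^ (a - 1) * (1 - y)) +
            (∑' n, dcoef a n * y ^ n) * (a * (1 - y) ^ (a - 1) * (-1))
          = (1 - y) ^ (a - 1) *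
              ((1 - y) * (∑' n, dcoef a n * ((n : ℝ) * y ^ (n - 1))) -
                a * ∑' n, dcoef a n * y ^ n) := by ring
        _ = 0 := by rw [hk]; ring
    exact hz ▸ hmul
  have hconst : (∑' n, dcoef a n * x ^ n) * (1 - x) ^ a =
      (∑' n, dcoef a n * (0 : ℝ) ^ n) * (1 - 0) ^ a := by
    have h0 : (0 : ℝ) ∈ Set.Ioo (-1 : ℝ) 1 := by constructor <;> norm_num
    have hle := Convex.norm_image_sub_le_of_norm_hasDerivWithin_le
      (f := fun w => (∑' n, dcoef a n * w ^ n) * (1 - w) ^ a) (f' := fun _ => (0 : ℝ)) (C := 0)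
      (fun w hw => (hderiv w hw).hasDerivWithinAt) (fun w _ => by simp) (convex_Ioo _ _) h0 hx1
    simp only [Real.norm_eq_abs, zero_mul] at hle
    have := abs_nonneg ((∑' n, dcoef a n * x ^ n) * (1 - x) ^ a -
      (∑' n, dcoef a n * (0 : ℝ) ^ n) * (1 - 0) ^ a)
    have h := abs_eq_zero.1 (le_antisymm hle this)
    linarith
  have hf0 : (∑' n, dcoef a n * (0 : ℝ) ^ n) = 1 := by
    rw [tsum_eq_single 0 (fun n hn => by simp [zero_pow hn])]
    simp [dcoef_zero]
  have h1x : (0 : ℝ) < 1 - x := by linarith [hx1.2]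
  have hpow_pos : (0 : ℝ) < (1 - x) ^ a := Real.rpow_pos_of_pos h1x a
  have h1 : (∑' n, dcoef a n * x ^ n) * (1 - x) ^ a = 1 := by
    rw [hconst, hf0]
    norm_num
  have hfx : (∑' n, dcoef a n * x ^ n) = (1 - x) ^ (-a) := by
    rw [Real.rpow_neg h1x.le]
    field_simp at h1 ⊢
    linarith [h1]
  exact hfx ▸ (summable_dcoef a hx).hasSum

lemma dcoef_nat (B m : ℕ) : dcoef ((B : ℝ) + 1) m = ((m + B).choose B : ℝ) := by
  rw [dcoef, prod_eq_factorial_div,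
    Nat.cast_choose ℝ (Nat.le_add_left B m), Nat.add_sub_cancel, div_div]

lemma Gamma_seq (x : ℝ) (hx : ∀ j : ℕ, x + j ≠ 0) (m : ℕ) :
    Real.Gamma (x + m) = (∏ j ∈ Finset.range m, (x + j)) * Real.Gamma x := by
  induction m with
  | zero => simp
  | succ m ih =>
      have hxm : x + m ≠ 0 := hx m
      have hc : x + ((m : ℝ) + 1) = (x + m) + 1 := by ring
      rw [show ((m + 1 : ℕ) : ℝ) = (m : ℝ) + 1 by push_cast; ring, hc,
        Real.Gamma_add_one hxm, ih, Finset.prod_range_succ]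
      ring

lemma cast_ne_aux (α : ℚ) (hα : ∀ m : ℕ, α ≠ -(m : ℚ)) (j : ℕ) : (α : ℝ) + (j : ℝ) ≠ 0 := by
  intro h
  apply hα j
  have : (α : ℝ) = -((j : ℚ) : ℝ) := by push_cast at h ⊢; linarith
  exact_mod_cast this

lemma genBinom_eq_dcoef (α : ℚ) (hα : ∀ m : ℕ, α ≠ -(m : ℚ)) {k n : ℕ} (hk : k ≤ n) :
    genBinom α n k = dcoef ((k : ℝ) + (α : ℝ) + 1) (n - k) := by
  have hne : ∀ j : ℕ, ((k : ℝ) + (α : ℝ) + 1) + j ≠ 0 := by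
    intro j h
    apply cast_ne_aux α hα (k + j + 1)
    push_cast
    linarith
  have hg : Real.Gamma ((k : ℝ) + (α : ℝ) + 1) ≠ 0 := by
    apply Real.Gamma_ne_zero
    intro m h
    apply cast_ne_aux α hα (k + m + 1)
    push_cast
    linarith [h]
  have hcast : (n : ℝ) + (α : ℝ) + 1 = ((k : ℝ) + (α : ℝ) + 1) + ((n - k : ℕ) : ℝ) := by
    rw [Nat.cast_sub hk]; ring
  have hfac : ((Nat.factorial (n - k) : ℝ)) ≠ 0 := Nat.cast_ne_zero.2 (n - k).factorial_ne_zero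
  rw [genBinom, hcast, Gamma_seq _ hne, dcoef]
  field_simp

set_option maxHeartbeats 1000000 in
/-- For `α ∈ ℚ` not a nonpositive integer and real `|z| < 1`, the series `∑ P_n(α) zⁿ`
converges and equals `(1−z)^{−α−1} E_α(−z/(1−z))`, with `E_α(w) = ∑_k w^k/(k!(k+α))`. -/
theorem gammaApprox_generating_function (α : ℚ) (hα : ∀ m : ℕ, α ≠ -(m : ℚ))
    (z : ℝ) (hz : |z| < 1) :
    HasSum (fun n : ℕ => gammaApprox α n * z ^ n)
      ((1 - z) ^ (-(α : ℝ) - 1) *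
        ∑' k : ℕ, (-z / (1 - z)) ^ k / ((Nat.factorial k : ℝ) * ((k : ℝ) + (α : ℝ)))) := by
  obtain ⟨hzl, hzr⟩ := abs_lt.1 hz
  have hz1 : (0 : ℝ) < 1 - z := by linarith
  have habs_z : |(|z|)| < 1 := by rwa [abs_abs]
  have hu0 : (0 : ℝ) < 1 - |z| := by
    have := le_abs_self z
    linarith [hz]
  set c : ℕ → ℝ := fun k => (-1 : ℝ) ^ k / ((Nat.factorial k : ℝ) * ((k : ℝ) + (α : ℝ))) with hc
  set F : ℕ × ℕ → ℝ :=
    fun p => c p.1 * dcoef ((p.1 : ℝ) + (α : ℝ) + 1) p.2 * z ^ (p.1 + p.2) with hFdef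
  have hαk : ∀ k : ℕ, ((k : ℝ) + (α : ℝ)) ≠ 0 := by
    intro k h
    exact cast_ne_aux α hα k (by linarith)
  -- inner sums (exact values)
  have hinner : ∀ k : ℕ, HasSum (fun m => F (k, m))
      (c k * z ^ k * (1 - z) ^ (-((k : ℝ) + (α : ℝ) + 1))) := by
    intro k
    have h := (hasSum_dcoef_rpow ((k : ℝ) + (α : ℝ) + 1) hz).mul_left (c k * z ^ k)
    have heq : (fun m => c k * z ^ k * (dcoef ((k : ℝ) + (α : ℝ) + 1) m * z ^ m)) =
        fun m => F (k, m) := by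
      funext m
      simp only [hFdef, pow_add]
      ring
    rwa [heq] at h
  -- the absolute majorant
  set A : ℕ := ⌈|(α : ℝ)|⌉₊ with hAdef
  have hA : |(α : ℝ)| ≤ (A : ℝ) := Nat.le_ceil _
  have hmaj : ∀ k : ℕ, HasSum
      (fun m => (|c k| * |z| ^ k) * (((m + (k + A)).choose (k + A) : ℝ) * |z| ^ m))
      ((|c k| * |z| ^ k) * (1 - |z|) ^ (-(((k + A : ℕ) : ℝ) + 1))) := by
    intro k
    have h := (hasSum_dcoef_rpow (((k + A : ℕ) : ℝ) + 1) habs_z).mul_left (|c k| * |z| ^ k)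
    have heq : (fun m => (|c k| * |z| ^ k) * (dcoef (((k + A : ℕ) : ℝ) + 1) m * |z| ^ m)) =
        fun m => (|c k| * |z| ^ k) * (((m + (k + A)).choose (k + A) : ℝ) * |z| ^ m) := by
      funext m
      rw [dcoef_nat]
    rwa [heq] at h
  have hFle : ∀ k m : ℕ, |F (k, m)| ≤
      (|c k| * |z| ^ k) * (((m + (k + A)).choose (k + A) : ℝ) * |z| ^ m) := by
    intro k m
    have hd : |dcoef ((k : ℝ) + (α : ℝ) + 1) m| ≤ ((m + (k + A)).choose (k + A) : ℝ) := by
      apply abs_dcoef_le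
      have h1 : |(k : ℝ) + (α : ℝ) + 1| ≤ |(k : ℝ) + 1| + |(α : ℝ)| := by
        calc |(k : ℝ) + (α : ℝ) + 1| = |((k : ℝ) + 1) + (α : ℝ)| := by ring_nf
          _ ≤ |(k : ℝ) + 1| + |(α : ℝ)| := abs_add_le _ _
      have h2 : |(k : ℝ) + 1| = (k : ℝ) + 1 := abs_of_pos (by positivity)
      push_cast
      rw [h2] at h1
      linarith
    calc |F (k, m)| = |c k| * |dcoef ((k : ℝ) + (α : ℝ) + 1) m| * (|z| ^ k * |z| ^ m) := by
          simp only [hFdef, abs_mul, abs_pow, pow_add]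
      _ ≤ |c k| * ((m + (k + A)).choose (k + A) : ℝ) * (|z| ^ k * |z| ^ m) := by
          gcongr
      _ = (|c k| * |z| ^ k) * (((m + (k + A)).choose (k + A) : ℝ) * |z| ^ m) := by ring
  have hinner_abs : ∀ k : ℕ, Summable (fun m => |F (k, m)|) := fun k =>
    Summable.of_nonneg_of_le (fun m => abs_nonneg _) (hFle k) (hmaj k).summable
  -- bound for |c k|
  set M : ℝ := 1 + ∑ j ∈ Finset.range (A + 1), 1 / |(j : ℝ) + (α : ℝ)| with hM
  have habs_pos : ∀ k : ℕ, (0 : ℝ) < |(k : ℝ) + (α : ℝ)| := fun k => abs_pos.2 (hαk k)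
  have hsum_nn : (0 : ℝ) ≤ ∑ j ∈ Finset.range (A + 1), 1 / |(j : ℝ) + (α : ℝ)| :=
    Finset.sum_nonneg fun j _ => by positivity
  have hMk : ∀ k : ℕ, 1 / |(k : ℝ) + (α : ℝ)| ≤ M := by
    intro k
    by_cases hkA : k < A + 1
    · have := Finset.single_le_sum (f := fun j : ℕ => 1 / |(j : ℝ) + (α : ℝ)|)
        (fun j _ => by positivity) (Finset.mem_range.2 hkA)
      rw [hM]
      linarith
    · push_neg at hkA
      have hk' : (A : ℝ) + 1 ≤ (k : ℝ) := by exact_mod_cast hkA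
      have h1 : (1 : ℝ) ≤ (k : ℝ) + (α : ℝ) := by
        have := neg_abs_le (α : ℝ)
        linarith
      have hdiv : 1 / |(k : ℝ) + (α : ℝ)| ≤ 1 := by
        rw [div_le_one (habs_pos k)]
        exact h1.trans (le_abs_self _)
      rw [hM]
      linarith
  have hck : ∀ k : ℕ, |c k| ≤ M / (Nat.factorial k : ℝ) := by
    intro k
    have hfk : (0 : ℝ) < (Nat.factorial k : ℝ) := by positivity
    have : |c k| = (1 / |(k : ℝ) + (α : ℝ)|) / (Nat.factorial k : ℝ) := by
      simp only [hc]
      rw [abs_div, abs_pow, abs_neg, abs_one, one_pow, abs_mul, Nat.abs_cast]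
      field_simp
    rw [this]
    gcongr
    exact hMk k
  -- summability of |F| on ℕ × ℕ
  have habsF : Summable (fun p : ℕ × ℕ => |F p|) := by
    refine (summable_prod_of_nonneg (fun p => abs_nonneg _)).2 ⟨hinner_abs, ?_⟩
    set u : ℝ := 1 - |z| with hu
    set t : ℝ := |z| / u with ht
    have ht0 : (0 : ℝ) ≤ t := by positivity
    have hupow : ∀ k : ℕ, (0 : ℝ) < u ^ k := fun k => pow_pos hu0 k
    refine Summable.of_nonneg_of_le (fun k => tsum_nonneg (fun m => abs_nonneg _))
      (fun k => ?_) (((Real.summable_pow_div_factorial t).mul_left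
        (M * u ^ (-((A : ℝ) + 1)))))
    have hstep1 : ∑' m, |F (k, m)| ≤
        (|c k| * |z| ^ k) * (1 - |z|) ^ (-(((k + A : ℕ) : ℝ) + 1)) := by
      rw [← (hmaj k).tsum_eq]
      exact Summable.tsum_le_tsum (hFle k) (hinner_abs k) (hmaj k).summable
    have hsplit : (1 - |z|) ^ (-(((k + A : ℕ) : ℝ) + 1)) =
        u ^ (-((A : ℝ) + 1)) * (u ^ k)⁻¹ := by
      rw [show -(((k + A : ℕ) : ℝ) + 1) = (-((A : ℝ) + 1)) + (-(k : ℝ)) by push_cast; ring,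
        Real.rpow_add hu0, Real.rpow_neg hu0.le (k : ℝ), Real.rpow_natCast]
    have hstep2 : (|c k| * |z| ^ k) * ((1 - |z|) ^ (-(((k + A : ℕ) : ℝ) + 1))) ≤
        M * u ^ (-((A : ℝ) + 1)) * (t ^ k / (Nat.factorial k : ℝ)) := by
      rw [hsplit]
      have htk : t ^ k = |z| ^ k / u ^ k := div_pow _ _ _
      have hfk : (0 : ℝ) < (Nat.factorial k : ℝ) := by positivity
      have hrpow_nn : (0 : ℝ) ≤ u ^ (-((A : ℝ) + 1)) := (Real.rpow_pos_of_pos hu0 _).le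
      calc (|c k| * |z| ^ k) * (u ^ (-((A : ℝ) + 1)) * (u ^ k)⁻¹)
          ≤ ((M / (Nat.factorial k : ℝ)) * |z| ^ k) * (u ^ (-((A : ℝ) + 1)) * (u ^ k)⁻¹) := by
            gcongr
            exact hck k
        _ = M * u ^ (-((A : ℝ) + 1)) * (t ^ k / (Nat.factorial k : ℝ)) := by
            rw [htk]
            field_simp
    exact hstep1.trans hstep2
  have hsumF : Summable F := Summable.of_norm (by simpa [Real.norm_eq_abs] using habsF)
  set SS : ℝ := ∑' p, F p with hSS
  have hF : HasSum F SS := hsumF.hasSum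
  -- grouping by rows
  have hrow : HasSum (fun k => c k * z ^ k * (1 - z) ^ (-((k : ℝ) + (α : ℝ) + 1))) SS :=
    hF.prod_fiberwise hinner
  -- grouping by antidiagonals
  have hdiag : HasSum (fun n : ℕ => ∑ p ∈ Finset.HasAntidiagonal.antidiagonal n, F p) SS := by
    have hsig : HasSum (fun x : Σ n : ℕ, Finset.HasAntidiagonal.antidiagonal n => F x.2) SS :=
      Finset.HasAntidiagonal.sigmaAntidiagonalEquivProd.hasSum_iff.2 hF
    refine hsig.sigma (fun n => ?_)
    rw [← Finset.sum_finset_coe]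
    exact hasSum_fintype _
  -- identify antidiagonal sums with `gammaApprox`
  have hdiag' : HasSum (fun n : ℕ => gammaApprox α n * z ^ n) SS := by
    have heq : (fun n : ℕ => ∑ p ∈ Finset.HasAntidiagonal.antidiagonal n, F p) =
        fun n : ℕ => gammaApprox α n * z ^ n := by
      funext n
      rw [Finset.Nat.sum_antidiagonal_eq_sum_range_succ_mk, gammaApprox, Finset.sum_mul]
      refine Finset.sum_congr rfl (fun k hk => ?_)
      have hkn : k ≤ n := Nat.lt_succ_iff.1 (Finset.mem_range.1 hk)
      simp only [hFdef]
      rw [genBinom_eq_dcoef α hα hkn, show k + (n - k) = n from Nat.add_sub_cancel' hkn]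
      simp only [hc]
      ring
    rwa [heq] at hdiag
  -- compute the value
  have hrow' : HasSum (fun k => (1 - z) ^ (-(α : ℝ) - 1) *
      ((-z / (1 - z)) ^ k / ((Nat.factorial k : ℝ) * ((k : ℝ) + (α : ℝ))))) SS := by
    have heq : (fun k => c k * z ^ k * (1 - z) ^ (-((k : ℝ) + (α : ℝ) + 1))) =
        fun k => (1 - z) ^ (-(α : ℝ) - 1) *
          ((-z / (1 - z)) ^ k / ((Nat.factorial k : ℝ) * ((k : ℝ) + (α : ℝ)))) := by
      funext k
      have hpow : (1 - z) ^ (-((k : ℝ) + (α : ℝ) + 1)) =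
          (1 - z) ^ (-(α : ℝ) - 1) * ((1 - z) ^ k)⁻¹ := by
        rw [show -((k : ℝ) + (α : ℝ) + 1) = (-(α : ℝ) - 1) + (-(k : ℝ)) by ring,
          Real.rpow_add hz1, Real.rpow_neg hz1.le (k : ℝ), Real.rpow_natCast]
      rw [hpow, div_pow]
      simp only [hc]
      have h1 : ((1 - z) ^ k : ℝ) ≠ 0 := pow_ne_zero _ hz1.ne'
      have h2 : ((Nat.factorial k : ℝ)) ≠ 0 := Nat.cast_ne_zero.2 k.factorial_ne_zero
      have h3 := hαk k
      have hnegz : (-z) ^ k = (-1 : ℝ) ^ k * z ^ k := by rw [neg_pow]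
      field_simp
      ring
    rwa [heq] at hrow
  set C : ℝ := (1 - z) ^ (-(α : ℝ) - 1) with hCdef
  have hC_ne : C ≠ 0 := (Real.rpow_pos_of_pos hz1 _).ne'
  have hu : HasSum (fun k => (-z / (1 - z)) ^ k /
      ((Nat.factorial k : ℝ) * ((k : ℝ) + (α : ℝ)))) (C⁻¹ * SS) := by
    have h := hrow'.mul_left C⁻¹
    have heq : (fun k => C⁻¹ * (C * ((-z / (1 - z)) ^ k /
        ((Nat.factorial k : ℝ) * ((k : ℝ) + (α : ℝ)))))) =
        fun k => (-z / (1 - z)) ^ k / ((Nat.factorial k : ℝ) * ((k : ℝ) + (α : ℝ))) := by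
      funext k
      rw [← mul_assoc, inv_mul_cancel₀ hC_ne, one_mul]
    rwa [heq] at h
  rw [hu.tsum_eq, ← mul_assoc, mul_inv_cancel₀ hC_ne, one_mul]
  exact hdiag'
end

section
/- Let α be a rational number that is not a nonpositive integer, and let P_n(α) = Σ_{k=0}^n binom(n+α, k+α)·(−1)^k/(k!·(k+α)), where binom(n+α, k+α) = Γ(n+α+1)/(Γ(k+α+1)·(n−k)!). Then P_0(α) = 1/α, P_1(α) = (1+α+α²)/(α(α+1)), P_2(α) = (4+5α+6α²+4α³+α⁴)/(2α(α+1)(α+2)), and for every n ≥ 0: (n+3)(n+3+α)·P_{n+3}(α) − (3n²+4nα+14n+α²+9α+17)·P_{n+2}(α) + (3n+5+2α)(n+2+α)·P_{n+1}(α) − (n+2+α)(n+1+α)·P_n(α) = 0. -/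
/-- Rising factorial product `(α+1)(α+2)⋯(α+m)`. -/
noncomputable def pp (α : ℚ) (m : ℕ) : ℝ := ∏ j ∈ Finset.range m, ((α : ℝ) + 1 + (j : ℝ))

/-- Rational form of the summand. -/
noncomputable def tt (α : ℚ) (n k : ℕ) : ℝ :=
  pp α n / (pp α k * (Nat.factorial (n - k) : ℝ)) * (-1 : ℝ) ^ k /
    ((Nat.factorial k : ℝ) * ((k : ℝ) + (α : ℝ)))

/-- Truncated summand. -/
noncomputable def uu (α : ℚ) (n k : ℕ) : ℝ := if k ≤ n then tt α n k else 0

/-- Telescoping certificate. -/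
noncomputable def GG (α : ℚ) (n k : ℕ) : ℝ :=
  if k ≤ n + 3 then
    -(k : ℝ) * ((k : ℝ) + (α : ℝ)) ^ 2 * tt α (n + 3) k / ((n : ℝ) + 3 + (α : ℝ))
  else 0

lemma cast_add_ne (α : ℚ) (hα : ∀ m : ℕ, α ≠ -(m : ℚ)) (j : ℕ) :
    (j : ℝ) + (α : ℝ) ≠ 0 := by
  intro h
  apply hα j
  have h2 : (α : ℝ) = -((j : ℕ) : ℝ) := by linarith
  exact_mod_cast h2

lemma pp_succ (α : ℚ) (m : ℕ) : pp α (m + 1) = pp α m * ((α : ℝ) + 1 + (m : ℝ)) := by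
  unfold pp; rw [Finset.prod_range_succ]

lemma pp_ne_zero (α : ℚ) (hα : ∀ m : ℕ, α ≠ -(m : ℚ)) (m : ℕ) : pp α m ≠ 0 := by
  unfold pp
  apply Finset.prod_ne_zero_iff.mpr
  intro j _
  have h := cast_add_ne α hα (j + 1)
  push_cast at h
  intro h0; apply h; linarith

lemma Gamma_pp (α : ℚ) (hα : ∀ m : ℕ, α ≠ -(m : ℚ)) (m : ℕ) :
    Real.Gamma ((m : ℝ) + (α : ℝ) + 1) = pp α m * Real.Gamma ((α : ℝ) + 1) := by
  induction m with
  | zero => simp [pp]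
  | succ m ih =>
    have h1 : ((m + 1 : ℕ) : ℝ) + (α : ℝ) + 1 = ((m : ℝ) + (α : ℝ) + 1) + 1 := by
      push_cast; ring
    have h2 : (m : ℝ) + (α : ℝ) + 1 ≠ 0 := by
      have h := cast_add_ne α hα (m + 1)
      push_cast at h
      intro h0; apply h; linarith
    rw [h1, Real.Gamma_add_one h2, ih, pp_succ]
    ring

lemma Gamma_alpha_ne (α : ℚ) (hα : ∀ m : ℕ, α ≠ -(m : ℚ)) :
    Real.Gamma ((α : ℝ) + 1) ≠ 0 := by
  apply Real.Gamma_ne_zero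
  intro m
  have h := cast_add_ne α hα (m + 1)
  push_cast at h
  intro h0; apply h; linarith

lemma genBinom_eq (α : ℚ) (hα : ∀ m : ℕ, α ≠ -(m : ℚ)) (n k : ℕ) :
    genBinom α n k = pp α n / (pp α k * (Nat.factorial (n - k) : ℝ)) := by
  unfold genBinom
  rw [Gamma_pp α hα n, Gamma_pp α hα k]
  have hf : ((Nat.factorial (n - k) : ℕ) : ℝ) ≠ 0 :=
    Nat.cast_ne_zero.mpr (Nat.factorial_ne_zero _)
  field_simp [pp_ne_zero α hα, Gamma_alpha_ne α hα]

lemma gA_eq (α : ℚ) (hα : ∀ m : ℕ, α ≠ -(m : ℚ)) (n : ℕ) :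
    gammaApprox α n = ∑ k ∈ Finset.range (n + 1), tt α n k := by
  unfold gammaApprox
  apply Finset.sum_congr rfl
  intro k _
  rw [genBinom_eq α hα, tt]

lemma gA_eq_uu (α : ℚ) (hα : ∀ m : ℕ, α ≠ -(m : ℚ)) (n m : ℕ) (hm : m ≤ n + 3) :
    gammaApprox α m = ∑ k ∈ Finset.range (n + 4), uu α m k := by
  rw [gA_eq α hα]
  have h1 : ∑ k ∈ Finset.range (m + 1), tt α m k = ∑ k ∈ Finset.range (m + 1), uu α m k := by
    apply Finset.sum_congr rfl
    intro k hk
    rw [Finset.mem_range] at hk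
    rw [uu, if_pos (by omega)]
  rw [h1]
  apply Finset.sum_subset (Finset.range_subset_range.mpr (by omega))
  intro x hx hnx
  rw [Finset.mem_range] at hx hnx
  rw [uu, if_neg (by omega)]

set_option maxHeartbeats 1600000 in
lemma key (α : ℚ) (hα : ∀ m : ℕ, α ≠ -(m : ℚ)) (n k : ℕ) (hk : k < n + 4) :
    ((n : ℝ) + 3) * ((n : ℝ) + 3 + (α : ℝ)) * uu α (n + 3) k
      - (3 * (n : ℝ) ^ 2 + 4 * (n : ℝ) * (α : ℝ) + 14 * (n : ℝ) + (α : ℝ) ^ 2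
          + 9 * (α : ℝ) + 17) * uu α (n + 2) k
      + (3 * (n : ℝ) + 5 + 2 * (α : ℝ)) * ((n : ℝ) + 2 + (α : ℝ)) * uu α (n + 1) k
      - ((n : ℝ) + 2 + (α : ℝ)) * ((n : ℝ) + 1 + (α : ℝ)) * uu α n k
    = GG α n (k + 1) - GG α n k := by
  have hppk := pp_ne_zero α hα k
  have hkf : ((Nat.factorial k : ℕ) : ℝ) ≠ 0 := Nat.cast_ne_zero.mpr (Nat.factorial_ne_zero _)
  have hkα : (k : ℝ) + (α : ℝ) ≠ 0 := cast_add_ne α hα k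
  have hk1α : (k : ℝ) + 1 + (α : ℝ) ≠ 0 := by
    have h := cast_add_ne α hα (k + 1); push_cast at h
    intro h0; apply h; linarith
  have hak1 : (α : ℝ) + 1 + (k : ℝ) ≠ 0 := by intro h; apply hk1α; linarith
  have hnα : (n : ℝ) + 3 + (α : ℝ) ≠ 0 := by
    have h := cast_add_ne α hα (n + 3); push_cast at h
    intro h0; apply h; linarith
  by_cases hkn : k ≤ n
  · -- interior case
    obtain ⟨m, rfl⟩ : ∃ m, n = k + m := ⟨n - k, by omega⟩
    have hmf : ((Nat.factorial m : ℕ) : ℝ) ≠ 0 := Nat.cast_ne_zero.mpr (Nat.factorial_ne_zero _)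
    push_cast at hnα
    have e1 : pp α (k + m + 1) = pp α (k + m) * ((α : ℝ) + 1 + ((k : ℝ) + (m : ℝ))) := by
      rw [pp_succ]; push_cast; ring
    have e2 : pp α (k + m + 2)
        = pp α (k + m) * ((α : ℝ) + 1 + ((k : ℝ) + (m : ℝ)))
          * ((α : ℝ) + 2 + ((k : ℝ) + (m : ℝ))) := by
      rw [show k + m + 2 = (k + m + 1) + 1 by omega, pp_succ, e1]; push_cast; ring
    have e3 : pp α (k + m + 3)
        = pp α (k + m) * ((α : ℝ) + 1 + ((k : ℝ) + (m : ℝ)))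
          * ((α : ℝ) + 2 + ((k : ℝ) + (m : ℝ))) * ((α : ℝ) + 3 + ((k : ℝ) + (m : ℝ))) := by
      rw [show k + m + 3 = (k + m + 2) + 1 by omega, pp_succ, e2]; push_cast; ring
    have ek : pp α (k + 1) = pp α k * ((α : ℝ) + 1 + (k : ℝ)) := pp_succ α k
    have f1 : ((Nat.factorial (m + 1) : ℕ) : ℝ) = ((m : ℝ) + 1) * (Nat.factorial m : ℝ) := by
      rw [Nat.factorial_succ]; push_cast; ring
    have f2 : ((Nat.factorial (m + 2) : ℕ) : ℝ)
        = ((m : ℝ) + 2) * ((m : ℝ) + 1) * (Nat.factorial m : ℝ) := by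
      rw [show m + 2 = (m + 1) + 1 by omega, Nat.factorial_succ, Nat.factorial_succ]
      push_cast; ring
    have f3 : ((Nat.factorial (m + 3) : ℕ) : ℝ)
        = ((m : ℝ) + 3) * ((m : ℝ) + 2) * ((m : ℝ) + 1) * (Nat.factorial m : ℝ) := by
      rw [show m + 3 = (m + 2) + 1 by omega, Nat.factorial_succ, Nat.factorial_succ,
        Nat.factorial_succ]
      push_cast; ring
    have fk : ((Nat.factorial (k + 1) : ℕ) : ℝ) = ((k : ℝ) + 1) * (Nat.factorial k : ℝ) := by
      rw [Nat.factorial_succ]; push_cast; ring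
    have pw : (-1 : ℝ) ^ (k + 1) = (-1 : ℝ) ^ k * (-1) := pow_succ (-1) k
    have hM1 : (m : ℝ) + 1 ≠ 0 := by positivity
    have hM2 : (m : ℝ) + 2 ≠ 0 := by positivity
    have hM3 : (m : ℝ) + 3 ≠ 0 := by positivity
    have hK1 : (k : ℝ) + 1 ≠ 0 := by positivity
    have t1 : tt α (k + m + 1) k
        = tt α (k + m) k * (((α : ℝ) + 1 + ((k : ℝ) + (m : ℝ))) / ((m : ℝ) + 1)) := by
      simp only [tt]
      rw [show k + m + 1 - k = m + 1 by omega, show k + m - k = m by omega, e1, f1]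
      field_simp
    have t2 : tt α (k + m + 2) k
        = tt α (k + m) k * (((α : ℝ) + 1 + ((k : ℝ) + (m : ℝ)))
            * ((α : ℝ) + 2 + ((k : ℝ) + (m : ℝ))) / (((m : ℝ) + 1) * ((m : ℝ) + 2))) := by
      simp only [tt]
      rw [show k + m + 2 - k = m + 2 by omega, show k + m - k = m by omega, e2, f2]
      field_simp
    have t3 : tt α (k + m + 3) k
        = tt α (k + m) k * (((α : ℝ) + 1 + ((k : ℝ) + (m : ℝ)))
            * ((α : ℝ) + 2 + ((k : ℝ) + (m : ℝ))) * ((α : ℝ) + 3 + ((k : ℝ) + (m : ℝ)))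
            / (((m : ℝ) + 1) * ((m : ℝ) + 2) * ((m : ℝ) + 3))) := by
      simp only [tt]
      rw [show k + m + 3 - k = m + 3 by omega, show k + m - k = m by omega, e3, f3]
      field_simp
    have t4 : tt α (k + m + 3) (k + 1)
        = tt α (k + m) k * (-(((α : ℝ) + 1 + ((k : ℝ) + (m : ℝ)))
            * ((α : ℝ) + 2 + ((k : ℝ) + (m : ℝ))) * ((α : ℝ) + 3 + ((k : ℝ) + (m : ℝ)))
            * ((k : ℝ) + (α : ℝ)))
            / (((m : ℝ) + 1) * ((m : ℝ) + 2) * ((α : ℝ) + 1 + (k : ℝ)) * ((k : ℝ) + 1)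
              * ((k : ℝ) + 1 + (α : ℝ)))) := by
      simp only [tt]
      rw [show k + m + 3 - (k + 1) = m + 2 by omega, show k + m - k = m by omega,
        e3, f2, ek, fk, pw]
      push_cast
      field_simp
    rw [uu, if_pos (by omega), uu, if_pos (by omega), uu, if_pos (by omega),
      uu, if_pos (by omega), GG, if_pos (by omega), GG, if_pos (by omega)]
    rw [t4, t3, t2, t1]
    generalize tt α (k + m) k = B
    push_cast
    field_simp
    ring
  · -- boundary cases
    obtain hc | hc | hc : k = n + 1 ∨ k = n + 2 ∨ k = n + 3 := by omega
    · subst hc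
      have hn1α : (n : ℝ) + 1 + (α : ℝ) ≠ 0 := by
        have h := cast_add_ne α hα (n + 1); push_cast at h
        intro h0; apply h; linarith
      have hn2α : (n : ℝ) + 2 + (α : ℝ) ≠ 0 := by
        have h := cast_add_ne α hα (n + 2); push_cast at h
        intro h0; apply h; linarith
      have hv2 : (α : ℝ) + 2 + (n : ℝ) ≠ 0 := by intro h; apply hn2α; linarith
      have hv3 : (α : ℝ) + 3 + (n : ℝ) ≠ 0 := by intro h; apply hnα; linarith
      have hpp := pp_ne_zero α hα (n + 1)
      have hnf : ((Nat.factorial (n + 1) : ℕ) : ℝ) ≠ 0 :=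
        Nat.cast_ne_zero.mpr (Nat.factorial_ne_zero _)
      have ee2 : pp α (n + 2) = pp α (n + 1) * ((α : ℝ) + 2 + (n : ℝ)) := by
        rw [show n + 2 = (n + 1) + 1 by omega, pp_succ]; push_cast; ring
      have ee3 : pp α (n + 3)
          = pp α (n + 1) * ((α : ℝ) + 2 + (n : ℝ)) * ((α : ℝ) + 3 + (n : ℝ)) := by
        rw [show n + 3 = (n + 2) + 1 by omega, pp_succ, ee2]; push_cast; ring
      have ff2 : ((Nat.factorial (n + 2) : ℕ) : ℝ)
          = ((n : ℝ) + 2) * (Nat.factorial (n + 1) : ℝ) := by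
        rw [show n + 2 = (n + 1) + 1 by omega, Nat.factorial_succ]; push_cast; ring
      have pw2 : (-1 : ℝ) ^ (n + 2) = (-1 : ℝ) ^ (n + 1) * (-1) := by
        rw [show n + 2 = (n + 1) + 1 by omega, pow_succ]
      have s1 : tt α (n + 2) (n + 1) = tt α (n + 1) (n + 1) * ((α : ℝ) + 2 + (n : ℝ)) := by
        simp only [tt]
        rw [show n + 2 - (n + 1) = 1 by omega, show n + 1 - (n + 1) = 0 by omega, ee2]
        set P := pp α (n + 1) with hP
        set F : ℝ := ((n + 1).factorial : ℝ) with hF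
        set E : ℝ := (-1 : ℝ) ^ (n + 1) with hE
        simp only [Nat.factorial_zero, Nat.factorial_one, show Nat.factorial 2 = 2 from rfl,
          Nat.cast_one, Nat.cast_ofNat]
        field_simp
      have s2 : tt α (n + 3) (n + 1)
          = tt α (n + 1) (n + 1) * (((α : ℝ) + 2 + (n : ℝ)) * ((α : ℝ) + 3 + (n : ℝ)) / 2) := by
        simp only [tt]
        rw [show n + 3 - (n + 1) = 2 by omega, show n + 1 - (n + 1) = 0 by omega, ee3]
        set P := pp α (n + 1) with hP
        set F : ℝ := ((n + 1).factorial : ℝ) with hF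
        set E : ℝ := (-1 : ℝ) ^ (n + 1) with hE
        simp only [Nat.factorial_zero, Nat.factorial_one, show Nat.factorial 2 = 2 from rfl,
          Nat.cast_one, Nat.cast_ofNat]
        field_simp
      have h2 : (n : ℝ) + 2 ≠ 0 := by positivity
      have s3 : tt α (n + 3) (n + 2)
          = tt α (n + 1) (n + 1) * (-(((α : ℝ) + 3 + (n : ℝ)) * ((n : ℝ) + 1 + (α : ℝ)))
              / (((n : ℝ) + 2) * ((n : ℝ) + 2 + (α : ℝ)))) := by
        simp only [tt]
        rw [show n + 3 - (n + 2) = 1 by omega, show n + 1 - (n + 1) = 0 by omega,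
          ee3, ee2, ff2, pw2]
        set P := pp α (n + 1) with hP
        set F : ℝ := ((n + 1).factorial : ℝ) with hF
        set E : ℝ := (-1 : ℝ) ^ (n + 1) with hE
        simp only [Nat.factorial_zero, Nat.factorial_one, show Nat.factorial 2 = 2 from rfl,
          Nat.cast_one, Nat.cast_ofNat]
        push_cast
        field_simp
      rw [show n + 1 + 1 = n + 2 by omega]
      rw [uu, if_pos (by omega), uu, if_pos (by omega), uu, if_pos (by omega),
        uu, if_neg (by omega), GG, if_pos (by omega), GG, if_pos (by omega)]
      rw [s3, s2, s1]
      generalize tt α (n + 1) (n + 1) = B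
      push_cast
      field_simp
      ring
    · subst hc
      have hn2α : (n : ℝ) + 2 + (α : ℝ) ≠ 0 := by
        have h := cast_add_ne α hα (n + 2); push_cast at h
        intro h0; apply h; linarith
      have hv2 : (α : ℝ) + 2 + (n : ℝ) ≠ 0 := by intro h; apply hn2α; linarith
      have hv3 : (α : ℝ) + 3 + (n : ℝ) ≠ 0 := by intro h; apply hnα; linarith
      have hpp := pp_ne_zero α hα (n + 2)
      have hnf : ((Nat.factorial (n + 2) : ℕ) : ℝ) ≠ 0 :=
        Nat.cast_ne_zero.mpr (Nat.factorial_ne_zero _)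
      have ee3 : pp α (n + 3) = pp α (n + 2) * ((α : ℝ) + 3 + (n : ℝ)) := by
        rw [show n + 3 = (n + 2) + 1 by omega, pp_succ]; push_cast; ring
      have ff3 : ((Nat.factorial (n + 3) : ℕ) : ℝ)
          = ((n : ℝ) + 3) * (Nat.factorial (n + 2) : ℝ) := by
        rw [show n + 3 = (n + 2) + 1 by omega, Nat.factorial_succ]; push_cast; ring
      have pw3 : (-1 : ℝ) ^ (n + 3) = (-1 : ℝ) ^ (n + 2) * (-1) := by
        rw [show n + 3 = (n + 2) + 1 by omega, pow_succ]
      have q1 : tt α (n + 3) (n + 2) = tt α (n + 2) (n + 2) * ((α : ℝ) + 3 + (n : ℝ)) := by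
        simp only [tt]
        rw [show n + 3 - (n + 2) = 1 by omega, show n + 2 - (n + 2) = 0 by omega, ee3]
        set P := pp α (n + 2) with hP
        set F : ℝ := ((n + 2).factorial : ℝ) with hF
        set E : ℝ := (-1 : ℝ) ^ (n + 2) with hE
        simp only [Nat.factorial_zero, Nat.factorial_one, show Nat.factorial 2 = 2 from rfl,
          Nat.cast_one, Nat.cast_ofNat]
        field_simp
      have h3 : (n : ℝ) + 3 ≠ 0 := by positivity
      have q2 : tt α (n + 3) (n + 3)
          = tt α (n + 2) (n + 2) * (-((n : ℝ) + 2 + (α : ℝ))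
              / (((n : ℝ) + 3) * ((n : ℝ) + 3 + (α : ℝ)))) := by
        simp only [tt]
        rw [show n + 3 - (n + 3) = 0 by omega, show n + 2 - (n + 2) = 0 by omega,
          ee3, ff3, pw3]
        set P := pp α (n + 2) with hP
        set F : ℝ := ((n + 2).factorial : ℝ) with hF
        set E : ℝ := (-1 : ℝ) ^ (n + 2) with hE
        simp only [Nat.factorial_zero, Nat.factorial_one, show Nat.factorial 2 = 2 from rfl,
          Nat.cast_one, Nat.cast_ofNat]
        push_cast
        field_simp
      rw [show n + 2 + 1 = n + 3 by omega]
      rw [uu, if_pos (by omega), uu, if_pos (by omega), uu, if_neg (by omega),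
        uu, if_neg (by omega), GG, if_pos (by omega), GG, if_pos (by omega)]
      rw [q2, q1]
      generalize tt α (n + 2) (n + 2) = B
      push_cast
      field_simp
      ring
    · subst hc
      rw [show n + 3 + 1 = n + 4 by omega]
      rw [uu, if_pos (by omega), uu, if_neg (by omega), uu, if_neg (by omega),
        uu, if_neg (by omega), GG, if_neg (by omega), GG, if_pos (by omega)]
      generalize tt α (n + 3) (n + 3) = B
      push_cast
      field_simp
      ring

/-- Initial values and third-order linear recurrence for `P_n(α)`. -/
theorem gammaApprox_recurrence (α : ℚ) (hα : ∀ m : ℕ, α ≠ -(m : ℚ)) :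
    gammaApprox α 0 = 1 / (α : ℝ) ∧
    gammaApprox α 1 = (1 + (α : ℝ) + (α : ℝ) ^ 2) / ((α : ℝ) * ((α : ℝ) + 1)) ∧
    gammaApprox α 2 = (4 + 5 * (α : ℝ) + 6 * (α : ℝ) ^ 2 + 4 * (α : ℝ) ^ 3 + (α : ℝ) ^ 4) /
      (2 * (α : ℝ) * ((α : ℝ) + 1) * ((α : ℝ) + 2)) ∧
    ∀ n : ℕ,
      ((n : ℝ) + 3) * ((n : ℝ) + 3 + (α : ℝ)) * gammaApprox α (n + 3)
        - (3 * (n : ℝ) ^ 2 + 4 * (n : ℝ) * (α : ℝ) + 14 * (n : ℝ) + (α : ℝ) ^ 2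
            + 9 * (α : ℝ) + 17) * gammaApprox α (n + 2)
        + (3 * (n : ℝ) + 5 + 2 * (α : ℝ)) * ((n : ℝ) + 2 + (α : ℝ)) * gammaApprox α (n + 1)
        - ((n : ℝ) + 2 + (α : ℝ)) * ((n : ℝ) + 1 + (α : ℝ)) * gammaApprox α n = 0 := by
  have hA0 : (α : ℝ) ≠ 0 := by have := cast_add_ne α hα 0; push_cast at this; intro h; apply this; linarith
  have hA1 : (α : ℝ) + 1 ≠ 0 := by have := cast_add_ne α hα 1; push_cast at this; intro h; apply this; linarith
  have hA2 : (α : ℝ) + 2 ≠ 0 := by have := cast_add_ne α hα 2; push_cast at this; intro h; apply this; linarith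
  have hA1' : (1 : ℝ) + (α : ℝ) ≠ 0 := by intro h; apply hA1; linarith
  have hA2' : (2 : ℝ) + (α : ℝ) ≠ 0 := by intro h; apply hA2; linarith
  have hB2 : (α : ℝ) + 1 + 1 ≠ 0 := by intro h; apply hA2; linarith
  refine ⟨?_, ?_, ?_, ?_⟩
  · rw [gA_eq α hα]
    simp [tt, pp, Finset.sum_range_succ, Nat.factorial]
  · rw [gA_eq α hα]
    simp [tt, pp, Finset.sum_range_succ, Finset.prod_range_succ, Nat.factorial]
    field_simp [hA1', hA2']
    ring
  · rw [gA_eq α hα]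
    simp only [Finset.sum_range_succ, Finset.sum_range_zero, tt, pp,
      Finset.prod_range_succ, Finset.prod_range_zero, Nat.factorial,
      Nat.cast_zero, Nat.cast_one, Nat.cast_ofNat, zero_add, add_zero, one_mul, mul_one]
    field_simp
    ring
  · intro n
    rw [gA_eq_uu α hα n (n+3) (by omega), gA_eq_uu α hα n (n+2) (by omega),
      gA_eq_uu α hα n (n+1) (by omega), gA_eq_uu α hα n n (by omega),
      Finset.mul_sum, Finset.mul_sum, Finset.mul_sum, Finset.mul_sum,
      ← Finset.sum_sub_distrib, ← Finset.sum_add_distrib, ← Finset.sum_sub_distrib]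
    rw [Finset.sum_congr rfl (fun k hk => key α hα n k (Finset.mem_range.mp hk)),
      Finset.sum_range_sub (GG α n)]
    have h1 : GG α n (n + 4) = 0 := by rw [GG, if_neg (by omega)]
    have h2 : GG α n 0 = 0 := by simp [GG]
    rw [h1, h2, sub_zero]
end

section
/- Let α be a rational number that is not a nonpositive integer, and let E_α(z) = Σ_{k=0}^∞ z^k/(k!(k+α)). Then x^α · E_α(−x) converges to Γ(α) as the real number x tends to +∞. -/
open Filter MeasureTheory Set Real intervalIntegral Topology

/-- The E-function `E_α(z) = ∑_{k=0}^∞ z^k/(k!(k+α))`. -/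
noncomputable def Ealpha (α : ℚ) (z : ℝ) : ℝ :=
  ∑' k : ℕ, z ^ k / ((Nat.factorial k : ℝ) * ((k : ℝ) + (α : ℝ)))

noncomputable def Ea (a : ℝ) (z : ℝ) : ℝ :=
  ∑' k : ℕ, z ^ k / ((Nat.factorial k : ℝ) * ((k : ℝ) + a))

lemma summable_Ea {a : ℝ} (ha : ∀ k : ℕ, (k : ℝ) + a ≠ 0) (z : ℝ) :
    Summable (fun k : ℕ => z ^ k / ((Nat.factorial k : ℝ) * ((k : ℝ) + a))) := by
  apply Summable.of_norm_bounded_eventually_nat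
    (Real.summable_pow_div_factorial |z|)
  filter_upwards [eventually_ge_atTop (⌈|a|⌉₊ + 1)] with n hn
  have h0 : |a| ≤ (⌈|a|⌉₊ : ℝ) := Nat.le_ceil _
  have h1 : ((⌈|a|⌉₊ : ℝ) + 1) ≤ (n : ℝ) := by exact_mod_cast hn
  have h2 : (1 : ℝ) ≤ (n : ℝ) + a := by
    have := abs_le.1 (le_refl |a|) |>.1
    linarith [neg_abs_le a]
  have hfac : (0 : ℝ) < (n.factorial : ℝ) := by positivity
  rw [norm_div, norm_mul]
  rw [Real.norm_natCast, Real.norm_eq_abs (z ^ n), Real.norm_eq_abs, abs_pow]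
  rw [abs_of_nonneg (by linarith : (0:ℝ) ≤ (n:ℝ) + a)]
  calc |z| ^ n / ((n.factorial : ℝ) * ((n:ℝ) + a))
      ≤ |z| ^ n / ((n.factorial : ℝ) * 1) := by
        have : (n.factorial : ℝ) * 1 ≤ (n.factorial : ℝ) * ((n:ℝ)+a) := by nlinarith
        exact div_le_div_of_nonneg_left (by positivity) (by positivity) this
    _ = |z| ^ n / n.factorial := by rw [mul_one]

lemma Ea_eq_integral {a : ℝ} (ha : 0 < a) (x : ℝ) :
    Ea a (-x) = ∫ t in Set.Ioc (0:ℝ) 1, t ^ (a - 1) * Real.exp (-x * t) := by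
  set μ := volume.restrict (Set.Ioc (0:ℝ) 1)
  set F : ℕ → ℝ → ℝ := fun k t => (-x) ^ k / (Nat.factorial k : ℝ) * t ^ ((k : ℝ) + a - 1)
    with hF
  have hexp : ∀ k : ℕ, (-1 : ℝ) < (k : ℝ) + a - 1 := by
    intro k
    have : (0:ℝ) ≤ k := Nat.cast_nonneg k
    linarith
  have hka : ∀ k : ℕ, (0:ℝ) < (k : ℝ) + a := by
    intro k; have : (0:ℝ) ≤ k := Nat.cast_nonneg k; linarith
  have hint : ∀ k : ℕ, Integrable (F k) μ := by
    intro k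
    apply Integrable.const_mul
    have h := intervalIntegrable_rpow' (a := 0) (b := 1) (hexp k)
    rwa [intervalIntegrable_iff_integrableOn_Ioc_of_le zero_le_one] at h
  have hrpow_int : ∀ k : ℕ, ∫ t in Set.Ioc (0:ℝ) 1, t ^ ((k:ℝ) + a - 1) = 1 / ((k:ℝ) + a) := by
    intro k
    rw [← integral_of_le zero_le_one]
    rw [integral_rpow (Or.inl (hexp k))]
    rw [sub_add_cancel]
    rw [Real.one_rpow, Real.zero_rpow (hka k).ne']
    ring
  have hval : ∀ k : ℕ, ∫ t, F k t ∂μ = (-x) ^ k / ((Nat.factorial k : ℝ) * ((k:ℝ) + a)) := by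
    intro k
    rw [hF]
    simp only
    rw [MeasureTheory.integral_const_mul]
    rw [hrpow_int k]
    field_simp
  have hnorm : ∀ k : ℕ, ∫ t, ‖F k t‖ ∂μ = |x| ^ k / ((Nat.factorial k : ℝ) * ((k:ℝ) + a)) := by
    intro k
    have : ∀ t ∈ Set.Ioc (0:ℝ) 1, ‖F k t‖ = |x| ^ k / (Nat.factorial k : ℝ) * t ^ ((k:ℝ) + a - 1) := by
      intro t ht
      rw [hF]
      simp only [norm_mul, norm_div]
      rw [Real.norm_eq_abs, Real.norm_eq_abs, Real.norm_eq_abs, abs_pow, abs_neg,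
        Nat.abs_cast, abs_of_nonneg (Real.rpow_nonneg ht.1.le _)]
    rw [setIntegral_congr_fun measurableSet_Ioc this]
    rw [MeasureTheory.integral_const_mul, hrpow_int k]
    field_simp
  have hsum : Summable fun k : ℕ => ∫ t, ‖F k t‖ ∂μ := by
    refine Summable.of_nonneg_of_le (f := fun k => (1/a) * (|x| ^ k / (Nat.factorial k : ℝ)))
      (fun k => integral_nonneg fun t => norm_nonneg _) ?_
      ((Real.summable_pow_div_factorial |x|).mul_left _)
    intro k
    rw [hnorm k]
    have h1 : (0:ℝ) < (Nat.factorial k : ℝ) := by positivity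
    rw [mul_comm (1/a), mul_one_div, div_div]
    apply div_le_div_of_nonneg_left (by positivity) (by positivity)
    have h2 : (1:ℝ) ≤ (Nat.factorial k : ℝ) := by exact_mod_cast Nat.one_le_iff_ne_zero.mpr k.factorial_ne_zero
    nlinarith [hka k]
  have key := MeasureTheory.integral_tsum_of_summable_integral_norm hint hsum
  have lhs : Ea a (-x) = ∑' k, ∫ t, F k t ∂μ := by
    rw [Ea]
    congr 1
    ext k
    rw [hval k]
  rw [lhs, key]
  apply setIntegral_congr_fun measurableSet_Ioc
  intro t ht
  simp only
  have ht0 : (0:ℝ) < t := ht.1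
  have step : ∀ k : ℕ, F k t = (-x * t) ^ k / (Nat.factorial k : ℝ) * t ^ (a - 1) := by
    intro k
    rw [hF]
    simp only
    rw [show (k:ℝ) + a - 1 = (k:ℝ) + (a - 1) by ring]
    rw [Real.rpow_add ht0, Real.rpow_natCast, mul_pow]
    ring
  rw [tsum_congr step, tsum_mul_right, Real.exp_eq_exp_ℝ, NormedSpace.exp_eq_tsum_div, mul_comm]

lemma rpow_mul_Ea_eq {a : ℝ} (ha : 0 < a) {x : ℝ} (hx : 0 < x) :
    x ^ a * Ea a (-x) = ∫ s in (0:ℝ)..x, Real.exp (-s) * s ^ (a - 1) := by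
  rw [Ea_eq_integral ha x, ← integral_of_le zero_le_one]
  have sub := smul_integral_comp_mul_right (a := 0) (b := 1)
    (fun s => Real.exp (-s) * s ^ (a - 1)) x
  simp only [smul_eq_mul, zero_mul, one_mul] at sub
  have congr1 : ∫ t in (0:ℝ)..1, Real.exp (-(t * x)) * (t * x) ^ (a - 1)
      = x ^ (a-1) * ∫ t in (0:ℝ)..1, t ^ (a - 1) * Real.exp (-x * t) := by
    rw [← intervalIntegral.integral_const_mul]
    apply integral_congr
    intro t ht
    rw [Set.uIcc_of_le zero_le_one] at ht
    simp only
    rw [Real.mul_rpow ht.1 hx.le, mul_comm t x]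
    ring_nf
  rw [congr1] at sub
  rw [← sub, ← mul_assoc]
  congr 1
  have h2 : x ^ (1:ℝ) * x ^ (a - 1) = x ^ a := by
    rw [← Real.rpow_add hx]; ring_nf
  rw [← h2, Real.rpow_one]
lemma tendsto_pos {a : ℝ} (ha : 0 < a) :
    Tendsto (fun x : ℝ => x ^ a * Ea a (-x)) atTop (𝓝 (Real.Gamma a)) := by
  have h1 : Tendsto (fun x : ℝ => ∫ s in (0:ℝ)..x, Real.exp (-s) * s ^ (a - 1)) atTop
      (𝓝 (Real.Gamma a)) := by
    rw [Real.Gamma_eq_integral ha]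
    exact intervalIntegral_tendsto_integral_Ioi 0 (Real.GammaIntegral_convergent ha) tendsto_id
  apply h1.congr'
  filter_upwards [eventually_gt_atTop (0:ℝ)] with x hx
  exact (rpow_mul_Ea_eq ha hx).symm

lemma Ea_rec {a : ℝ} (ha : ∀ k : ℕ, (k : ℝ) + a ≠ 0) (z : ℝ) :
    a * Ea a z + z * Ea (a + 1) z = Real.exp z := by
  have ha' : ∀ k : ℕ, (k : ℝ) + (a + 1) ≠ 0 := by
    intro k
    have := ha (k + 1)
    push_cast at this ⊢
    intro h; exact this (by linarith)
  have hfac : ∀ k : ℕ, ((Nat.factorial k : ℝ)) ≠ 0 := fun k => by positivity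
  set f : ℕ → ℝ := fun k => z ^ k / ((Nat.factorial k : ℝ) * ((k : ℝ) + a)) with hf
  set u : ℕ → ℝ := fun k => z ^ k / (Nat.factorial k : ℝ) with hu
  set w : ℕ → ℝ := fun k => (k : ℝ) * z ^ k / ((Nat.factorial k : ℝ) * ((k : ℝ) + a)) with hw
  have hsf : Summable f := summable_Ea ha z
  have hsu : Summable u := Real.summable_pow_div_factorial z
  have hid : ∀ k : ℕ, a * f k + w k = u k := by
    intro k
    rw [hf, hu, hw]
    simp only
    rw [mul_div_assoc', ← add_div,
      show a * z ^ k + (k:ℝ) * z ^ k = z ^ k * ((k:ℝ) + a) from by ring,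
      mul_div_mul_right _ _ (ha k)]
  have hsw : Summable w := by
    have : w = fun k => u k - a * f k := by
      funext k; rw [← hid k]; ring
    rw [this]
    exact hsu.sub (hsf.mul_left a)
  have hshift : ∀ k : ℕ, z * (z ^ k / ((Nat.factorial k : ℝ) * ((k : ℝ) + (a + 1)))) = w (k + 1) := by
    intro k
    have hk1 : ((k:ℝ) + 1) ≠ 0 := by positivity
    rw [hw]
    simp only [Nat.factorial_succ]
    push_cast
    rw [show ((k:ℝ) + 1) * z ^ (k+1) = z ^ (k + 1) * ((k:ℝ) + 1) from by ring,
      show (((k:ℝ)+1) * (Nat.factorial k : ℝ)) * (((k:ℝ)+1) + a)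
         = ((Nat.factorial k : ℝ) * (((k:ℝ)+1) + a)) * ((k:ℝ)+1) from by ring,
      mul_div_mul_right _ _ hk1, pow_succ]
    ring
  have step1 : z * Ea (a + 1) z = ∑' k : ℕ, w (k + 1) := by
    rw [Ea, ← tsum_mul_left]
    exact tsum_congr hshift
  have step2 : ∑' k : ℕ, w (k + 1) = ∑' k, w k := by
    rw [hsw.tsum_eq_zero_add]
    simp [hw]
  have step3 : a * Ea a z = ∑' k, a * f k := by
    rw [Ea, ← tsum_mul_left]
  rw [step1, step2, step3, ← (hsf.mul_left a).tsum_add hsw, tsum_congr hid]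
  rw [Real.exp_eq_exp_ℝ, NormedSpace.exp_eq_tsum_div]

lemma tendsto_Ea {a : ℝ} (ha : ∀ m : ℕ, a ≠ -(m : ℝ)) :
    Tendsto (fun x : ℝ => x ^ a * Ea a (-x)) atTop (𝓝 (Real.Gamma a)) := by
  suffices H : ∀ n : ℕ, ∀ a : ℝ, (∀ m : ℕ, a ≠ -(m : ℝ)) → -a < n →
      Tendsto (fun x : ℝ => x ^ a * Ea a (-x)) atTop (𝓝 (Real.Gamma a)) by
    obtain ⟨n, hn⟩ := exists_nat_gt (-a)
    exact H n a ha hn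
  intro n
  induction n with
  | zero =>
    intro a ha hn
    exact tendsto_pos (by simpa using hn)
  | succ n ih =>
    intro a ha hn
    rcases lt_or_ge 0 a with hpos | hpos
    · exact tendsto_pos hpos
    have ha0 : a ≠ 0 := fun h => ha 0 (by simp [h])
    have hka : ∀ k : ℕ, (k : ℝ) + a ≠ 0 := by
      intro k h
      exact ha k (by linarith)
    have H := ih (a + 1) (fun m h => ha (m + 1) (by push_cast; linarith)) (by push_cast at hn ⊢; linarith)
    have key : ∀ x : ℝ, 0 < x →
        x ^ a * Ea a (-x) = (x ^ a * Real.exp (-x) + x ^ (a + 1) * Ea (a + 1) (-x)) / a := by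
      intro x hx
      have hrec := Ea_rec hka (-x)
      have hEa : Ea a (-x) = (Real.exp (-x) + x * Ea (a + 1) (-x)) / a := by
        field_simp
        linarith [hrec]
      rw [hEa, Real.rpow_add_one hx.ne' a]
      field_simp
    have hlim : Tendsto (fun x : ℝ => (x ^ a * Real.exp (-x) + x ^ (a + 1) * Ea (a + 1) (-x)) / a)
        atTop (𝓝 ((0 + Real.Gamma (a + 1)) / a)) := by
      apply Tendsto.div_const
      refine Tendsto.add ?_ H
      have h0 := tendsto_rpow_mul_exp_neg_mul_atTop_nhds_zero a 1 one_pos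
      simpa using h0
    have hG : (0 + Real.Gamma (a + 1)) / a = Real.Gamma a := by
      rw [Real.Gamma_add_one ha0]
      field_simp
      ring
    rw [hG] at hlim
    apply hlim.congr'
    filter_upwards [eventually_gt_atTop (0:ℝ)] with x hx
    exact (key x hx).symm

/-- `x^α E_α(−x) → Γ(α)` as the real number `x → +∞`. -/
theorem rpow_mul_Ealpha_tendsto_Gamma (α : ℚ) (hα : ∀ m : ℕ, α ≠ -(m : ℚ)) :
    Filter.Tendsto (fun x : ℝ => x ^ (α : ℝ) * Ealpha α (-x)) Filter.atTop
      (nhds (Real.Gamma (α : ℝ))) := by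
  have h : ∀ m : ℕ, (α : ℝ) ≠ -(m : ℝ) := by
    intro m hm
    exact hα m (by exact_mod_cast hm)
  exact tendsto_Ea h
end

section
/- Let E(z) = Σ_{k=1}^∞ z^k/(k!·k) and P_n = Σ_{k=1}^n (−1)^k · C(n,k) · (1/k) · (1 − 1/k!). Then for every real z with |z| < 1, the series Σ_{n=0}^∞ P_n z^n converges and equals log(1−z)/(1−z) − (1/(1−z)) · E(−z/(1−z)). -/
/-- The E-function `E(z) = ∑_{k=1}^∞ z^k/(k!·k)`. -/
noncomputable def Egamma (z : ℝ) : ℝ :=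
  ∑' k : ℕ, z ^ (k + 1) / ((Nat.factorial (k + 1) : ℝ) * ((k : ℝ) + 1))

/-- `P_n = ∑_{k=1}^n (−1)^k C(n,k) (1/k)(1 − 1/k!)`. -/
noncomputable def gammaSeq (n : ℕ) : ℝ :=
  ∑ k ∈ Finset.Icc 1 n,
    (-1 : ℝ) ^ k * (Nat.choose n k : ℝ) * (1 / (k : ℝ)) * (1 - 1 / (Nat.factorial k : ℝ))

open scoped Nat
open Complex Finset
open scoped NNReal ENNReal

/-- complex version of E -/
noncomputable def Ec (z : ℂ) : ℂ :=
  ∑' k : ℕ, z ^ (k + 1) / ((Nat.factorial (k + 1) : ℂ) * ((k : ℂ) + 1))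

lemma summable_Ec_aux (z : ℂ) :
    Summable (fun k : ℕ => z ^ (k + 1) / ((Nat.factorial (k + 1) : ℂ) * ((k : ℂ) + 1))) := by
  apply Summable.of_norm
  have h : Summable (fun k : ℕ => ‖z‖ ^ (k + 1) / (Nat.factorial (k + 1) : ℝ)) := by
    have := (summable_nat_add_iff 1).mpr (Real.summable_pow_div_factorial ‖z‖)
    exact this
  refine h.of_nonneg_of_le (fun k => norm_nonneg _) (fun k => ?_)
  rw [norm_div, norm_pow]
  have h1 : (0:ℝ) < (Nat.factorial (k+1) : ℝ) := by positivity
  have h2 : ‖((Nat.factorial (k + 1) : ℂ) * ((k : ℂ) + 1))‖ = (Nat.factorial (k+1) : ℝ) * ((k:ℝ)+1) := by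
    rw [norm_mul]
    norm_cast
  rw [h2]
  have h3 : (Nat.factorial (k+1) : ℝ) ≤ (Nat.factorial (k+1) : ℝ) * ((k:ℝ)+1) := by
    nlinarith
  exact div_le_div_of_nonneg_left (by positivity) h1 h3

/-- coefficients of E : `ec k = 1/(k! k)` (with `ec 0 = 0` by convention `1/0=0`). -/
noncomputable def ec (k : ℕ) : ℂ := 1 / ((Nat.factorial k : ℂ) * (k : ℂ))

lemma ec_zero : ec 0 = 0 := by simp [ec]

lemma hasSum_Ec (z : ℂ) : HasSum (fun k : ℕ => ec k * z ^ k) (Ec z) := by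
  have h0 : HasSum (fun k : ℕ => ec (k + 1) * z ^ (k + 1)) (Ec z) := by
    have := (summable_Ec_aux z).hasSum
    refine this.congr_fun fun k => ?_
    simp only [ec, div_eq_mul_inv, one_mul]
    push_cast
    ring
  refine (hasSum_nat_add_iff' (f := fun k : ℕ => ec k * z ^ k) 1).mp ?_
  simpa [ec_zero] using h0

/-- the formal power series of Ec -/
noncomputable def EcSeries : FormalMultilinearSeries ℂ ℂ ℂ :=
  FormalMultilinearSeries.ofScalars ℂ ec

lemma EcSeries_radius : EcSeries.radius = ⊤ := by
  apply FormalMultilinearSeries.radius_eq_top_of_summable_norm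
  intro r
  refine (Real.summable_pow_div_factorial (r : ℝ)).of_nonneg_of_le
    (fun n => by positivity) (fun n => ?_)
  rw [EcSeries, FormalMultilinearSeries.ofScalars_norm]
  match n with
  | 0 => simp [ec_zero, Nat.factorial]
  | (m + 1) => 
    have h1 : ‖ec (m+1)‖ ≤ 1 / (Nat.factorial (m+1) : ℝ) := by
      have he : ‖ec (m+1)‖ = 1 / ((Nat.factorial (m+1) : ℝ) * ((m+1 : ℕ) : ℝ)) := by
        rw [ec, norm_div, norm_one, norm_mul, Complex.norm_natCast, Complex.norm_natCast]
      have hf : (0:ℝ) < (Nat.factorial (m+1) : ℝ) := by positivity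
      have hm : (1:ℝ) ≤ ((m+1 : ℕ) : ℝ) := by exact_mod_cast Nat.succ_le_succ (Nat.zero_le m)
      rw [he, div_le_div_iff₀ (by positivity) hf]
      nlinarith
    calc ‖ec (m+1)‖ * (r:ℝ)^(m+1) ≤ (1 / (Nat.factorial (m+1):ℝ)) * (r:ℝ)^(m+1) := by
          apply mul_le_mul_of_nonneg_right h1 (by positivity)
      _ = (r:ℝ)^(m+1) / (Nat.factorial (m+1):ℝ) := by ring

lemma Ec_eq_sum : Ec = EcSeries.sum := by
  funext z
  rw [FormalMultilinearSeries.sum, ← (hasSum_Ec z).tsum_eq]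
  apply tsum_congr
  intro n
  rw [EcSeries, FormalMultilinearSeries.ofScalars_apply_eq, smul_eq_mul]

lemma Ec_differentiable : Differentiable ℂ Ec := by
  intro z
  have h := EcSeries.hasFPowerSeriesOnBall (by rw [EcSeries_radius]; simp)
  have h2 := h.analyticAt_of_mem (y := z) (by rw [EcSeries_radius]; simp)
  rw [← Ec_eq_sum] at h2
  exact h2.differentiableAt

/-- complex RHS function -/
noncomputable def Fc (z : ℂ) : ℂ :=
  Complex.log (1 - z) / (1 - z) - (1 / (1 - z)) * Ec (-z / (1 - z))

lemma one_sub_ne_zero {z : ℂ} (hz : ‖z‖ < 1) : 1 - z ≠ 0 := by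
  intro h
  have : z = 1 := by linear_combination -h
  rw [this] at hz; simp at hz

lemma one_sub_mem_slitPlane {z : ℂ} (hz : ‖z‖ < 1) : 1 - z ∈ Complex.slitPlane := by
  rw [Complex.mem_slitPlane_iff]
  left
  have : |z.re| < 1 := lt_of_le_of_lt (Complex.abs_re_le_norm z) hz
  simp only [Complex.sub_re, Complex.one_re]
  cases abs_lt.mp this; linarith

lemma Fc_differentiableOn {R : NNReal} (hR : (R : ℝ) < 1) :
    DifferentiableOn ℂ Fc (Metric.closedBall 0 R) := by
  intro x hx
  have hx1 : ‖x‖ < 1 := by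
    rw [Metric.mem_closedBall, dist_zero_right] at hx
    exact lt_of_le_of_lt hx hR
  have h0 : (1 : ℂ) - x ≠ 0 := one_sub_ne_zero hx1
  have hsub : DifferentiableAt ℂ (fun z : ℂ => 1 - z) x := by fun_prop
  have hlog : DifferentiableAt ℂ (fun z : ℂ => Complex.log (1 - z)) x :=
    (Complex.differentiableAt_log (one_sub_mem_slitPlane hx1)).comp x hsub
  have hinv : DifferentiableAt ℂ (fun z : ℂ => (1 - z)⁻¹) x := hsub.inv h0
  have hw : DifferentiableAt ℂ (fun z : ℂ => -z / (1 - z)) x := by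
    apply DifferentiableAt.div (by fun_prop) hsub h0
  have hEc : DifferentiableAt ℂ (fun z : ℂ => Ec (-z / (1 - z))) x :=
    (Ec_differentiable _).comp x hw
  have : DifferentiableAt ℂ Fc x := by
    unfold Fc
    apply DifferentiableAt.sub
    · simp only [div_eq_mul_inv]
      exact hlog.mul hinv
    · simp only [one_div]
      exact hinv.mul hEc
  exact this.differentiableWithinAt


/-- real coefficient sequence -/
noncomputable def rc (k : ℕ) : ℝ :=
  (-1 : ℝ) ^ k * (1 / (k : ℝ)) * (1 - 1 / (Nat.factorial k : ℝ))

lemma rc_zero : rc 0 = 0 := by simp [rc]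

lemma abs_rc_le_one (k : ℕ) : |rc k| ≤ 1 := by
  match k with
  | 0 => simp [rc_zero]
  | (m+1) =>
    rw [rc, abs_mul, abs_mul, _root_.abs_pow, abs_neg, abs_one, one_pow, one_mul]
    have h1 : |1 / ((m+1 : ℕ) : ℝ)| ≤ 1 := by
      rw [_root_.abs_of_nonneg (by positivity)]
      rw [div_le_one (by positivity)]
      exact_mod_cast Nat.succ_le_succ (Nat.zero_le m)
    have h2 : |1 - 1 / (Nat.factorial (m+1) : ℝ)| ≤ 1 := by
      have hf : (1:ℝ) ≤ (Nat.factorial (m+1) : ℝ) := by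
        exact_mod_cast Nat.one_le_iff_ne_zero.mpr (Nat.factorial_ne_zero (m+1))
      rw [_root_.abs_of_nonneg (by rw [sub_nonneg, div_le_one (by linarith)]; linarith)]
      have : (0:ℝ) < 1 / (Nat.factorial (m+1) : ℝ) := by positivity
      linarith
    calc |1 / ((m+1 : ℕ) : ℝ)| * |1 - 1 / (Nat.factorial (m+1) : ℝ)| ≤ 1 * 1 := by
          apply mul_le_mul h1 h2 (abs_nonneg _) zero_le_one
      _ = 1 := by ring

lemma gammaSeq_eq_range (n : ℕ) :
    gammaSeq n = ∑ k ∈ Finset.range (n+1), rc k * (Nat.choose n k : ℝ) := by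
  have hs : Finset.range (n+1) = insert 0 (Finset.Icc 1 n) := by
    ext m; simp [Finset.mem_range, Finset.mem_Icc]; omega
  rw [hs, Finset.sum_insert (by simp)]
  rw [rc_zero]
  simp only [zero_mul, zero_add]
  unfold gammaSeq rc
  apply Finset.sum_congr rfl
  intro k _
  ring

lemma hasSum_small {z : ℂ} (hz : ‖z‖ < 1/2) :
    HasSum (fun n : ℕ => ((gammaSeq n : ℝ) : ℂ) * z ^ n) (Fc z) := by
  have hz1 : ‖z‖ < 1 := by linarith
  have h1z : (1:ℂ) - z ≠ 0 := one_sub_ne_zero hz1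
  set g : ℕ × ℕ → ℂ := fun p =>
    if p.2 ≤ p.1 then ((rc p.2 : ℝ) : ℂ) * (Nat.choose p.1 p.2 : ℂ) * z ^ p.1 else 0 with hgdef
  -- summability of the double sum
  have hGsum : Summable (fun p : ℕ × ℕ =>
      if p.2 ≤ p.1 then ((Nat.choose p.1 p.2 : ℝ)) * ‖z‖ ^ p.1 else 0) := by
    rw [summable_prod_of_nonneg]
    · constructor
      · intro n
        apply summable_of_ne_finset_zero (s := Finset.range (n+1))
        intro k hk
        simp only [Finset.mem_range, not_lt] at hk
        have : ¬ (k ≤ n) := by omega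
        simp [this]
      · have hsum_eq : ∀ n : ℕ, (∑' k : ℕ, if k ≤ n then ((Nat.choose n k : ℝ)) * ‖z‖ ^ n else 0)
            = (2 * ‖z‖) ^ n := by
          intro n
          rw [tsum_eq_sum (s := Finset.range (n+1))]
          · have : ∀ b ∈ Finset.range (n+1), (if b ≤ n then ((Nat.choose n b : ℝ)) * ‖z‖ ^ n else 0)
                = (Nat.choose n b : ℝ) * ‖z‖ ^ n := by
              intro b hb
              simp only [Finset.mem_range] at hb
              rw [if_pos (by omega)]
            rw [Finset.sum_congr rfl this, ← Finset.sum_mul]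
            rw [← Nat.cast_sum, Nat.sum_range_choose]
            rw [mul_pow]
            norm_num
          · intro k hk
            simp only [Finset.mem_range, not_lt] at hk
            have : ¬ (k ≤ n) := by omega
            simp [this]
        apply Summable.congr (f := fun n : ℕ => (2 * ‖z‖) ^ n)
        · exact summable_geometric_of_lt_one (by positivity) (by linarith)
        · intro n
          rw [hsum_eq n]
    · intro p
      positivity
  have hgsum : Summable g := by
    apply Summable.of_norm_bounded hGsum
    intro p
    rw [hgdef]
    by_cases h : p.2 ≤ p.1
    · simp only [h, if_true]
      rw [norm_mul, norm_mul, Complex.norm_real, Complex.norm_natCast, norm_pow]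
      have := abs_rc_le_one p.2
      have hc : (0:ℝ) ≤ (Nat.choose p.1 p.2 : ℝ) := by positivity
      have hzp : (0:ℝ) ≤ ‖z‖ ^ p.1 := by positivity
      calc |rc p.2| * (Nat.choose p.1 p.2 : ℝ) * ‖z‖ ^ p.1
          ≤ 1 * (Nat.choose p.1 p.2 : ℝ) * ‖z‖ ^ p.1 := by
            apply mul_le_mul_of_nonneg_right (mul_le_mul_of_nonneg_right this hc) hzp
        _ = (Nat.choose p.1 p.2 : ℝ) * ‖z‖ ^ p.1 := by ring
    · simp [h]
  obtain ⟨T, hgT⟩ := hgsum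
  -- row sums
  have hrow : ∀ n : ℕ, HasSum (fun k => g (n, k)) (((gammaSeq n : ℝ) : ℂ) * z ^ n) := by
    intro n
    have heq : (∑ k ∈ Finset.range (n+1), g (n, k)) = ((gammaSeq n : ℝ) : ℂ) * z ^ n := by
      rw [gammaSeq_eq_range]
      push_cast
      rw [Finset.sum_mul]
      apply Finset.sum_congr rfl
      intro k hk
      simp only [Finset.mem_range] at hk
      rw [hgdef]
      simp only [if_pos (by omega : k ≤ n)]
    rw [← heq]
    apply hasSum_sum_of_ne_finset_zero
    intro k hk
    simp only [Finset.mem_range, not_lt] at hk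
    rw [hgdef]
    simp only [if_neg (by omega : ¬ (k ≤ n))]
  have hA : HasSum (fun n : ℕ => ((gammaSeq n : ℝ) : ℂ) * z ^ n) T :=
    hgT.prod_fiberwise hrow
  -- column sums
  have hcol : ∀ k : ℕ, HasSum (fun n => g (n, k))
      (((rc k : ℝ) : ℂ) * z ^ k * (1 / (1 - z) ^ (k + 1))) := by
    intro k
    refine (hasSum_nat_add_iff' (f := fun n => g (n, k)) k).mp ?_
    have hzero : (∑ i ∈ Finset.range k, g (i, k)) = 0 := by
      apply Finset.sum_eq_zero
      intro i hi
      simp only [Finset.mem_range] at hi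
      rw [hgdef]
      simp only [if_neg (by omega : ¬ (k ≤ i))]
    rw [hzero, sub_zero]
    have hmain := (hasSum_choose_mul_geometric_of_norm_lt_one k hz1).mul_left
      (((rc k : ℝ) : ℂ) * z ^ k)
    refine hmain.congr_fun fun m => ?_
    rw [hgdef]
    simp only [if_pos (by omega : k ≤ m + k)]
    rw [pow_add]
    ring
  have hswap : HasSum (g ∘ (Equiv.prodComm ℕ ℕ)) T :=
    ((Equiv.prodComm ℕ ℕ).hasSum_iff).mpr hgT
  have hB : HasSum (fun k : ℕ => ((rc k : ℝ) : ℂ) * z ^ k * (1 / (1 - z) ^ (k + 1))) T :=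
    hswap.prod_fiberwise hcol
  -- evaluate the column series
  set w : ℂ := -z / (1 - z) with hwdef
  have hnormw : ‖w‖ < 1 := by
    rw [hwdef, norm_div, norm_neg]
    have h2 : 1 - ‖z‖ ≤ ‖1 - z‖ := by
      calc 1 - ‖z‖ = ‖(1:ℂ)‖ - ‖z‖ := by simp
        _ ≤ ‖1 - z‖ := norm_sub_norm_le 1 z
    rw [div_lt_one (by linarith)]
    linarith
  have hlog : HasSum (fun n : ℕ => w ^ n / n) (-Complex.log (1 - w)) := by
    have h := hasSum_taylorSeries_log (z := -w) (by rwa [norm_neg])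
    have h2 : HasSum (fun n : ℕ => -(w ^ n / n)) (Complex.log (1 - w)) := by
      have : (1 : ℂ) + -w = 1 - w := by ring
      rw [this] at h
      refine h.congr_fun fun n => ?_
      have hsign : ((-1:ℂ))^(n+1) * ((-1:ℂ))^n = -1 := by
        rw [← pow_add, show n+1+n = 2*n+1 by ring, pow_succ, pow_mul]
        norm_num
      calc -(w^n/(n:ℂ)) = (((-1:ℂ))^(n+1) * ((-1:ℂ))^n) * w^n/(n:ℂ) := by rw [hsign]; ring
        _ = (-1)^(n+1) * (-w)^n / (n:ℂ) := by rw [neg_pow w n]; ring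
    simpa using h2.neg
  have hE := hasSum_Ec w
  have hcomb := (hlog.sub hE).mul_left ((1 - z)⁻¹)
  have hterm : ∀ k : ℕ, (1 - z)⁻¹ * (w ^ k / k - ec k * w ^ k)
      = ((rc k : ℝ) : ℂ) * z ^ k * (1 / (1 - z) ^ (k + 1)) := by
    intro k
    match k with
    | 0 => simp [ec_zero, rc_zero]
    | (m+1) =>
      have hk : ((m+1 : ℕ) : ℂ) ≠ 0 := by exact_mod_cast Nat.succ_ne_zero m
      have hf : ((Nat.factorial (m+1) : ℕ) : ℂ) ≠ 0 := by
        exact_mod_cast Nat.factorial_ne_zero (m+1)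
      have hwk : w ^ (m+1) = (-1:ℂ)^(m+1) * z^(m+1) / (1-z)^(m+1) := by
        rw [hwdef, div_pow, neg_pow z (m+1)]
      have e1 : w ^ (m+1) / ((m+1:ℕ):ℂ) - ec (m+1) * w ^ (m+1)
          = w ^ (m+1) * ((1/((m+1:ℕ):ℂ)) - ec (m+1)) := by ring
      have e2 : ((rc (m+1) : ℝ) : ℂ) = (-1:ℂ)^(m+1) * ((1/((m+1:ℕ):ℂ)) - ec (m+1)) := by
        rw [rc, ec]
        have key : (1/((m:ℂ)+1)) * (1 - 1/((Nat.factorial (m+1) : ℂ))) =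
            1/((m:ℂ)+1) - 1/(((Nat.factorial (m+1) : ℂ)) * ((m:ℂ)+1)) := by
          rw [mul_sub, mul_one, div_mul_div_comm, one_mul, mul_comm]
        push_cast
        push_cast at key
        rw [mul_assoc, key]
      rw [e1, hwk, e2]
      have h1zp : ((1:ℂ) - z) ^ (m+1) ≠ 0 := pow_ne_zero _ h1z
      field_simp
      ring
  have hC : HasSum (fun k : ℕ => ((rc k : ℝ) : ℂ) * z ^ k * (1 / (1 - z) ^ (k + 1)))
      ((1 - z)⁻¹ * (-Complex.log (1 - w) - Ec w)) :=
    hcomb.congr_fun fun k => (hterm k).symm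
  have hval : (1 - z)⁻¹ * (-Complex.log (1 - w) - Ec w) = Fc z := by
    have h1w : (1:ℂ) - w = (1 - z)⁻¹ := by
      rw [hwdef]
      field_simp
      ring
    rw [h1w, Complex.log_inv _ (Complex.slitPlane_arg_ne_pi (one_sub_mem_slitPlane hz1))]
    rw [Fc, hwdef]
    field_simp
  rw [hval] at hC
  rwa [hC.unique hB]

noncomputable def qSeries : FormalMultilinearSeries ℂ ℂ ℂ :=
  FormalMultilinearSeries.ofScalars ℂ (fun n => ((gammaSeq n : ℝ) : ℂ))

lemma hasFPower_q : HasFPowerSeriesOnBall Fc qSeries 0 (1/4 : ℝ≥0) := by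
  have hquarter : ‖(((1:ℝ)/4 : ℝ) : ℂ)‖ < 1/2 := by
    rw [Complex.norm_real, Real.norm_eq_abs, _root_.abs_of_nonneg (by norm_num : (0:ℝ) ≤ 1/4)]
    norm_num
  constructor
  · -- radius bound
    have hsum := (hasSum_small hquarter).summable
    have hnorm : Summable (fun n : ℕ => ‖((gammaSeq n : ℝ) : ℂ) * (((1:ℝ)/4 : ℝ) : ℂ) ^ n‖) :=
      summable_norm_iff.mpr hsum
    have : Summable (fun n : ℕ => ‖qSeries n‖ * ((1/4 : ℝ≥0) : ℝ) ^ n) := by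
      refine hnorm.congr fun n => ?_
      rw [qSeries, FormalMultilinearSeries.ofScalars_norm, norm_mul, norm_pow,
        Complex.norm_real, Complex.norm_real, Real.norm_eq_abs, Real.norm_eq_abs,
        _root_.abs_of_nonneg (by norm_num : (0:ℝ) ≤ 1/4)]
      norm_num
    have := FormalMultilinearSeries.le_radius_of_summable _ this
    exact_mod_cast this
  · -- positivity
    norm_num
  · -- hasSum
    intro y hy
    rw [mem_emetric_ball_zero_iff] at hy
    have hy2 : ‖y‖ < 1/2 := by
      have : (‖y‖₊ : ℝ) < ((1/4 : ℝ≥0) : ℝ) := by exact_mod_cast hy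
      rw [coe_nnnorm] at this
      have h14 : ((1/4 : ℝ≥0) : ℝ) = 1/4 := by norm_num
      rw [h14] at this
      linarith
    rw [zero_add]
    refine (hasSum_small hy2).congr_fun fun n => ?_
    rw [qSeries, FormalMultilinearSeries.ofScalars_apply_eq, smul_eq_mul]

lemma hasSum_Fc {z : ℂ} (hz : ‖z‖ < 1) :
    HasSum (fun n : ℕ => ((gammaSeq n : ℝ) : ℂ) * z ^ n) (Fc z) := by
  set R : NNReal := ⟨(1 + ‖z‖)/2, by positivity⟩ with hRdef
  have hR1 : (R : ℝ) < 1 := by rw [hRdef]; show (1 + ‖z‖)/2 < 1; linarith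
  have hzR : ‖z‖ < (R : ℝ) := by rw [hRdef]; show ‖z‖ < (1 + ‖z‖)/2; linarith
  have hRpos : 0 < R := by
    rw [← NNReal.coe_pos, hRdef]
    show (0:ℝ) < (1 + ‖z‖)/2
    positivity
  have hball := (Fc_differentiableOn hR1).hasFPowerSeriesOnBall hRpos
  have hpq : cauchyPowerSeries Fc 0 R = qSeries :=
    hball.hasFPowerSeriesAt.eq_formalMultilinearSeries hasFPower_q.hasFPowerSeriesAt
  have hmem : z ∈ Metric.eball (0 : ℂ) (R : ℝ≥0∞) := by
    rw [mem_emetric_ball_zero_iff]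
    exact_mod_cast hzR
  have hs := hball.hasSum hmem
  rw [zero_add, hpq] at hs
  refine hs.congr_fun fun n => ?_
  rw [qSeries, FormalMultilinearSeries.ofScalars_apply_eq, smul_eq_mul]

lemma summable_Egamma_aux (x : ℝ) :
    Summable (fun k : ℕ => x ^ (k + 1) / ((Nat.factorial (k + 1) : ℝ) * ((k : ℝ) + 1))) := by
  apply Summable.of_norm
  have h : Summable (fun k : ℕ => |x| ^ (k + 1) / (Nat.factorial (k + 1) : ℝ)) :=
    (summable_nat_add_iff 1).mpr (Real.summable_pow_div_factorial |x|)
  refine h.of_nonneg_of_le (fun k => norm_nonneg _) (fun k => ?_)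
  rw [Real.norm_eq_abs, abs_div, _root_.abs_pow]
  have h1 : (0:ℝ) < (Nat.factorial (k+1) : ℝ) := by positivity
  have h2 : |(Nat.factorial (k+1) : ℝ) * ((k:ℝ)+1)| = (Nat.factorial (k+1) : ℝ) * ((k:ℝ)+1) := by
    rw [_root_.abs_of_nonneg (by positivity)]
  rw [h2]
  have h3 : (Nat.factorial (k+1) : ℝ) ≤ (Nat.factorial (k+1) : ℝ) * ((k:ℝ)+1) := by nlinarith
  exact div_le_div_of_nonneg_left (by positivity) h1 h3

lemma Ec_ofReal (x : ℝ) : Ec (x : ℂ) = ((Egamma x : ℝ) : ℂ) := by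
  have hre := (summable_Egamma_aux x).hasSum
  have hmap := Complex.ofRealCLM.hasSum hre
  have : HasSum (fun k : ℕ => (x:ℂ) ^ (k + 1) / ((Nat.factorial (k + 1) : ℂ) * ((k : ℂ) + 1)))
      ((Egamma x : ℝ) : ℂ) := by
    refine hmap.congr_fun fun k => ?_
    norm_num
  rw [Ec, this.tsum_eq]

/-- For real `|z| < 1`, the series `∑ P_n zⁿ` converges and equals
`log(1−z)/(1−z) − (1/(1−z)) E(−z/(1−z))`. -/
theorem gammaSeq_generating_function (z : ℝ) (hz : |z| < 1) :
    HasSum (fun n : ℕ => gammaSeq n * z ^ n)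
      (Real.log (1 - z) / (1 - z) - (1 / (1 - z)) * Egamma (-z / (1 - z))) := by
  have hzc : ‖(z : ℂ)‖ < 1 := by rwa [Complex.norm_real, Real.norm_eq_abs]
  have hs := hasSum_Fc hzc
  have hz1 : (0:ℝ) < 1 - z := by cases abs_lt.mp hz; linarith
  have hFval : Fc (z : ℂ) = ((Real.log (1 - z) / (1 - z)
      - (1 / (1 - z)) * Egamma (-z / (1 - z)) : ℝ) : ℂ) := by
    rw [Fc]
    have e1 : (1:ℂ) - (z:ℂ) = ((1 - z : ℝ) : ℂ) := by push_cast; ring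
    have e2 : -(z:ℂ) / ((1 - z : ℝ) : ℂ) = ((-z / (1 - z) : ℝ) : ℂ) := by push_cast; ring
    rw [e1, e2, Ec_ofReal, ← Complex.ofReal_log (le_of_lt hz1)]
    push_cast
    ring
  rw [hFval] at hs
  have hfinal := Complex.reCLM.hasSum hs
  refine hfinal.congr_fun fun n => ?_
  have h : ((gammaSeq n : ℝ) : ℂ) * (z:ℂ) ^ n = ((gammaSeq n * z ^ n : ℝ) : ℂ) := by push_cast; ring
  simp only [Complex.reCLM_apply, h, Complex.ofReal_re]
end

section
/- Let P_n = Σ_{k=1}^n (−1)^k · C(n,k) · (1/k) · (1 − 1/k!). Then P_0 = 0, P_1 = 0, P_2 = 1/4, and for every n ≥ 0: (n+3)²·P_{n+3} − (3n²+14n+17)·P_{n+2} + (n+2)(3n+5)·P_{n+1} − (n+1)(n+2)·P_n = 0. -/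
/-- Row relation for binomial coefficients, valid over ℝ for all `k`. -/
lemma choose_row (m k : ℕ) :
    ((m : ℝ) + 1) * (Nat.choose m k : ℝ) = (Nat.choose (m + 1) k : ℝ) * ((m : ℝ) + 1 - k) := by
  rcases le_or_gt k (m + 1) with h | h
  · have h0 := congrArg (Nat.cast : ℕ → ℝ) (Nat.choose_mul_succ_eq m k)
    push_cast [Nat.cast_sub h] at h0
    linarith
  · have h1 : Nat.choose m k = 0 := Nat.choose_eq_zero_of_lt (by omega)
    have h2 : Nat.choose (m + 1) k = 0 := Nat.choose_eq_zero_of_lt h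
    simp [h1, h2]

/-- Column relation for binomial coefficients, valid over ℝ for all `k`. -/
lemma choose_col (N k : ℕ) :
    ((k : ℝ) + 1) * (Nat.choose N (k + 1) : ℝ) = (Nat.choose N k : ℝ) * ((N : ℝ) - k) := by
  rcases le_or_gt k N with h | h
  · have h0 := congrArg (Nat.cast : ℕ → ℝ) (Nat.choose_succ_right_eq N k)
    push_cast [Nat.cast_sub h] at h0
    linarith
  · have h1 : Nat.choose N k = 0 := Nat.choose_eq_zero_of_lt h
    have h2 : Nat.choose N (k + 1) = 0 := Nat.choose_eq_zero_of_lt (by omega)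
    simp [h1, h2]

/-- Zeilberger certificate function. -/
noncomputable def gcert (n k : ℕ) : ℝ :=
  (-1 : ℝ) ^ k * (Nat.choose (n + 3) k : ℝ) *
    ( -(((n : ℝ) + 2)) * k * ((k : ℝ) ^ 2 - 3 * k + (n : ℝ) + 3)
      + ((n : ℝ) + 1) * ((n : ℝ) + 2) * (k : ℝ) ^ 2 / (Nat.factorial k : ℝ) )
    / (((n : ℝ) + 1) * ((n : ℝ) + 2) * ((n : ℝ) + 3))

lemma key_s14 (n k : ℕ) (hk : 1 ≤ k) :
    ((n : ℝ) + 3) ^ 2 *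
        ((-1 : ℝ) ^ k * (Nat.choose (n + 3) k : ℝ) * (1 / (k : ℝ)) * (1 - 1 / (Nat.factorial k : ℝ)))
      - (3 * (n : ℝ) ^ 2 + 14 * (n : ℝ) + 17) *
        ((-1 : ℝ) ^ k * (Nat.choose (n + 2) k : ℝ) * (1 / (k : ℝ)) * (1 - 1 / (Nat.factorial k : ℝ)))
      + ((n : ℝ) + 2) * (3 * (n : ℝ) + 5) *
        ((-1 : ℝ) ^ k * (Nat.choose (n + 1) k : ℝ) * (1 / (k : ℝ)) * (1 - 1 / (Nat.factorial k : ℝ)))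
      - ((n : ℝ) + 1) * ((n : ℝ) + 2) *
        ((-1 : ℝ) ^ k * (Nat.choose n k : ℝ) * (1 / (k : ℝ)) * (1 - 1 / (Nat.factorial k : ℝ)))
      = gcert n (k + 1) - gcert n k := by
  have hn3 : ((n : ℝ) + 3) ≠ 0 := by positivity
  have hn2 : ((n : ℝ) + 2) ≠ 0 := by positivity
  have hn1 : ((n : ℝ) + 1) ≠ 0 := by positivity
  have hk0 : ((k : ℝ)) ≠ 0 := by
    have : (0 : ℝ) < k := by exact_mod_cast hk
    linarith
  have hk1 : ((k : ℝ) + 1) ≠ 0 := by positivity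
  have hf : ((Nat.factorial k : ℝ)) ≠ 0 := by
    exact_mod_cast (Nat.factorial_pos k).ne'
  have hc2 : (Nat.choose (n + 2) k : ℝ)
      = (Nat.choose (n + 3) k : ℝ) * ((n : ℝ) + 3 - k) / ((n : ℝ) + 3) := by
    have h := choose_row (n + 2) k
    push_cast at h
    field_simp
    linarith
  have hc1 : (Nat.choose (n + 1) k : ℝ)
      = (Nat.choose (n + 3) k : ℝ) * (((n : ℝ) + 3 - k) * ((n : ℝ) + 2 - k))
        / (((n : ℝ) + 3) * ((n : ℝ) + 2)) := by
    have h := choose_row (n + 1) k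
    push_cast at h
    rw [hc2] at h
    field_simp at h ⊢
    linarith
  have hc0 : (Nat.choose n k : ℝ)
      = (Nat.choose (n + 3) k : ℝ) * (((n : ℝ) + 3 - k) * ((n : ℝ) + 2 - k) * ((n : ℝ) + 1 - k))
        / (((n : ℝ) + 3) * ((n : ℝ) + 2) * ((n : ℝ) + 1)) := by
    have h := choose_row n k
    push_cast at h
    rw [hc1] at h
    field_simp at h ⊢
    linarith
  have hc4 : (Nat.choose (n + 3) (k + 1) : ℝ)
      = (Nat.choose (n + 3) k : ℝ) * ((n : ℝ) + 3 - k) / ((k : ℝ) + 1) := by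
    have h := choose_col (n + 3) k
    push_cast at h
    field_simp
    linarith
  have hfact : ((Nat.factorial (k + 1) : ℝ)) = ((k : ℝ) + 1) * (Nat.factorial k : ℝ) := by
    rw [Nat.factorial_succ]; push_cast; ring
  unfold gcert
  rw [hc0, hc1, hc2, hc4, hfact]
  push_cast
  rw [pow_succ]
  field_simp
  ring

lemma gcert_one (n : ℕ) : gcert n 1 = 0 := by
  have h : (Nat.factorial 1 : ℝ) = 1 := by norm_num [Nat.factorial]
  unfold gcert
  rw [Nat.choose_one_right, h]
  push_cast
  ring

lemma gcert_top (n : ℕ) : gcert n (n + 4) = 0 := by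
  unfold gcert
  rw [Nat.choose_eq_zero_of_lt (by omega)]
  simp

lemma gammaSeq_ext (n m : ℕ) (hm : m ≤ n + 3) :
    gammaSeq m = ∑ k ∈ Finset.Icc 1 (n + 3),
      (-1 : ℝ) ^ k * (Nat.choose m k : ℝ) * (1 / (k : ℝ)) * (1 - 1 / (Nat.factorial k : ℝ)) := by
  unfold gammaSeq
  apply Finset.sum_subset (Finset.Icc_subset_Icc_right hm)
  intro x hx hnx
  simp only [Finset.mem_Icc] at hx hnx
  have : m < x := by omega
  simp [Nat.choose_eq_zero_of_lt this]

/-- Initial values and third-order linear recurrence for `P_n`. -/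
theorem gammaSeq_recurrence :
    gammaSeq 0 = 0 ∧ gammaSeq 1 = 0 ∧ gammaSeq 2 = 1 / 4 ∧
    ∀ n : ℕ,
      ((n : ℝ) + 3) ^ 2 * gammaSeq (n + 3)
        - (3 * (n : ℝ) ^ 2 + 14 * (n : ℝ) + 17) * gammaSeq (n + 2)
        + ((n : ℝ) + 2) * (3 * (n : ℝ) + 5) * gammaSeq (n + 1)
        - ((n : ℝ) + 1) * ((n : ℝ) + 2) * gammaSeq n = 0 := by
  refine ⟨by simp [gammaSeq], ?_, ?_, ?_⟩
  · have h : Finset.Icc 1 1 = ({1} : Finset ℕ) := rfl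
    simp [gammaSeq, h, Nat.factorial]
  · have h : Finset.Icc 1 2 = ({1, 2} : Finset ℕ) := rfl
    rw [gammaSeq, h, Finset.sum_insert (by decide), Finset.sum_singleton]
    norm_num [Nat.factorial]
  · intro n
    rw [gammaSeq_ext n (n + 3) le_rfl, gammaSeq_ext n (n + 2) (by omega),
      gammaSeq_ext n (n + 1) (by omega), gammaSeq_ext n n (by omega),
      Finset.mul_sum, Finset.mul_sum, Finset.mul_sum, Finset.mul_sum,
      ← Finset.sum_sub_distrib, ← Finset.sum_add_distrib, ← Finset.sum_sub_distrib]
    rw [Finset.sum_congr rfl (fun k hk => key_s14 n k (Finset.mem_Icc.mp hk).1)]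
    rw [← Finset.Ico_add_one_right_eq_Icc, Finset.sum_Ico_eq_sum_range]
    have : ∀ i ∈ Finset.range (n + 4 - 1),
        gcert n (1 + i + 1) - gcert n (1 + i)
          = (fun j => gcert n (j + 1)) (i + 1) - (fun j => gcert n (j + 1)) i := by
      intro i _
      simp only []
      congr 2 <;> omega
    rw [Finset.sum_congr (s₁ := Finset.range (n + 3 + 1 - 1)) rfl this, Finset.sum_range_sub (fun j => gcert n (j + 1))]
    have h1 : n + 4 - 1 = n + 3 := by omega
    rw [h1]
    have h2 : n + 3 + 1 = n + 4 := by omega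
    rw [h2, gcert_top, gcert_one]
    ring
end

section
/- Define sequences of integers (U_k) and (V_k) by U_0 = 0, U_1 = 1, V_0 = 1, V_1 = 0, and X_{k+1} = k·X_k + X_{k−1} for k ≥ 1 (for X = U and X = V). Then U_k/V_k converges, as k → ∞, to (Σ_{n=0}^∞ 1/(n!)²) / (Σ_{n=0}^∞ 1/(n!·(n+1)!)). -/
open Filter

noncomputable def crB (k : ℕ) : ℝ :=
  ∑' n : ℕ, 1 / ((Nat.factorial n : ℝ) * (Nat.factorial (n + k) : ℝ))

lemma summable_crB (k : ℕ) :
    Summable (fun n : ℕ => 1 / ((Nat.factorial n : ℝ) * (Nat.factorial (n + k) : ℝ))) := by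
  have h : Summable (fun n : ℕ => 1 / (Nat.factorial n : ℝ)) := by
    simpa using Real.summable_pow_div_factorial 1
  refine Summable.of_nonneg_of_le (fun n => by positivity) (fun n => ?_) h
  have h1 : (1 : ℝ) ≤ (Nat.factorial (n + k) : ℝ) := by
    exact_mod_cast Nat.one_le_iff_ne_zero.mpr (Nat.factorial_ne_zero _)
  have h2 : (0 : ℝ) < (Nat.factorial n : ℝ) := by positivity
  rw [div_le_div_iff₀ (by positivity) h2]
  nlinarith

lemma crB_pos (k : ℕ) : 0 < crB k := by
  refine Summable.tsum_pos (summable_crB k) (fun n => by positivity) 0 ?_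
  positivity

lemma crB_nonneg (k : ℕ) : 0 ≤ crB k := (crB_pos k).le

lemma crSummable_g (k : ℕ) :
    Summable (fun n : ℕ => (n : ℝ) / ((Nat.factorial n : ℝ) * (Nat.factorial (n + (k+1)) : ℝ))) := by
  rw [← summable_nat_add_iff 1]
  refine (summable_crB (k+2)).congr fun n => ?_
  have h1 : Nat.factorial (n + 1) = (n + 1) * Nat.factorial n := Nat.factorial_succ n
  have h2 : n + 1 + (k + 1) = n + (k + 2) := by ring
  rw [h2, h1]
  push_cast
  have : (Nat.factorial n : ℝ) ≠ 0 := by positivity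
  have : (Nat.factorial (n + (k+2)) : ℝ) ≠ 0 := by positivity
  field_simp

lemma crB_rec (k : ℕ) : crB k = (k + 1) * crB (k + 1) + crB (k + 2) := by
  have hf1 := summable_crB (k+1)
  have hg := crSummable_g k
  have hterm : ∀ n : ℕ,
      1 / ((Nat.factorial n : ℝ) * (Nat.factorial (n + k) : ℝ)) =
      ((k:ℝ) + 1) * (1 / ((Nat.factorial n : ℝ) * (Nat.factorial (n + (k+1)) : ℝ))) +
      (n : ℝ) / ((Nat.factorial n : ℝ) * (Nat.factorial (n + (k+1)) : ℝ)) := by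
    intro n
    have h1 : (Nat.factorial (n + (k+1)) : ℝ) = ((n:ℝ) + k + 1) * (Nat.factorial (n + k) : ℝ) := by
      have : n + (k+1) = (n + k) + 1 := by ring
      rw [this, Nat.factorial_succ]; push_cast; ring
    have h2 : (Nat.factorial n : ℝ) ≠ 0 := by positivity
    have h3 : (Nat.factorial (n + k) : ℝ) ≠ 0 := by positivity
    rw [h1]; field_simp; ring
  have : crB k = ∑' n : ℕ,
      (((k:ℝ) + 1) * (1 / ((Nat.factorial n : ℝ) * (Nat.factorial (n + (k+1)) : ℝ))) +
      (n : ℝ) / ((Nat.factorial n : ℝ) * (Nat.factorial (n + (k+1)) : ℝ))) :=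
    tsum_congr hterm
  rw [this, Summable.tsum_add (hf1.mul_left _) hg, tsum_mul_left]
  have hgsum : (∑' n : ℕ, (n : ℝ) / ((Nat.factorial n : ℝ) * (Nat.factorial (n + (k+1)) : ℝ)))
      = crB (k + 2) := by
    rw [Summable.tsum_eq_zero_add hg]
    simp only [Nat.cast_zero, zero_div, zero_add]
    refine tsum_congr fun n => ?_
    have h1 : Nat.factorial (n + 1) = (n + 1) * Nat.factorial n := Nat.factorial_succ n
    have h2 : n + 1 + (k + 1) = n + (k + 2) := by ring
    rw [h2, h1]
    push_cast
    have : (Nat.factorial n : ℝ) ≠ 0 := by positivity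
    have : (Nat.factorial (n + (k+2)) : ℝ) ≠ 0 := by positivity
    field_simp
  rw [hgsum]
  have hid : (∑' n : ℕ, 1 / ((Nat.factorial n : ℝ) * (Nat.factorial (n + (k+1)) : ℝ))) = crB (k+1) := rfl
  rw [hid]

lemma crB_le (k : ℕ) : crB k ≤ crB 0 / (Nat.factorial k : ℝ) := by
  have hkf : (0:ℝ) < (Nat.factorial k : ℝ) := by positivity
  rw [le_div_iff₀ hkf, crB, crB, ← tsum_mul_right]
  refine Summable.tsum_le_tsum (fun n => ?_) ((summable_crB k).mul_right _) (summable_crB 0)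
  have hd : Nat.factorial n * Nat.factorial k ≤ Nat.factorial (n + k) :=
    Nat.le_of_dvd (Nat.factorial_pos _) (Nat.factorial_mul_factorial_dvd_factorial_add n k)
  have hd' : (Nat.factorial n : ℝ) * (Nat.factorial k : ℝ) ≤ (Nat.factorial (n + k) : ℝ) := by
    exact_mod_cast hd
  have h2 : (0:ℝ) < (Nat.factorial n : ℝ) := by positivity
  have h3 : (0:ℝ) < (Nat.factorial (n + k) : ℝ) := by positivity
  have h5 : (0:ℝ) < (Nat.factorial n : ℝ) * (Nat.factorial (n + k) : ℝ) := by positivity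
  have h6 : (0:ℝ) < (Nat.factorial n : ℝ) * (Nat.factorial (n + 0) : ℝ) := by positivity
  rw [div_mul_eq_mul_div, one_mul, div_le_div_iff₀ h5 h6]
  simp only [Nat.add_zero, one_mul]
  nlinarith

lemma crB_tendsto_zero : Tendsto crB atTop (nhds 0) := by
  refine squeeze_zero' (Eventually.of_forall fun k => crB_nonneg k) ?_
      (tendsto_const_div_atTop_nhds_zero_nat (crB 0))
  filter_upwards [eventually_ge_atTop 1] with k hk
  refine (crB_le k).trans ?_
  have h1 : (k : ℝ) ≤ (Nat.factorial k : ℝ) := by exact_mod_cast Nat.self_le_factorial k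
  have h2 : (0:ℝ) < k := by exact_mod_cast hk
  exact div_le_div_of_nonneg_left (crB_nonneg 0) h2 h1

lemma crTwo_step {P : ℕ → Prop} (h0 : P 0) (h1 : P 1)
    (h : ∀ k, P k → P (k+1) → P (k+2)) : ∀ k, P k := by
  have H : ∀ k, P k ∧ P (k+1) := by
    intro k
    induction k with
    | zero => exact ⟨h0, h1⟩
    | succ n ih => exact ⟨ih.2, h n ih.1 ih.2⟩
  exact fun k => (H k).1

/-- The convergents `U_k/V_k` of the continued fraction `[0; 1, 2, 3, 4, …]`, where `U, V`
satisfy `X_{k+1} = k X_k + X_{k−1}` with `U_0 = 0, U_1 = 1, V_0 = 1, V_1 = 0`, converge to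
`F(1)/F'(1) = (∑ 1/(n!)²) / (∑ 1/(n!(n+1)!))`. -/
theorem convergents_tendsto_ratio (U V : ℕ → ℤ)
    (hU0 : U 0 = 0) (hU1 : U 1 = 1) (hV0 : V 0 = 1) (hV1 : V 1 = 0)
    (hUrec : ∀ k : ℕ, 1 ≤ k → U (k + 1) = (k : ℤ) * U k + U (k - 1))
    (hVrec : ∀ k : ℕ, 1 ≤ k → V (k + 1) = (k : ℤ) * V k + V (k - 1)) :
    Filter.Tendsto (fun k : ℕ => (U k : ℝ) / (V k : ℝ)) Filter.atTop
      (nhds ((∑' n : ℕ, 1 / ((Nat.factorial n : ℝ)) ^ 2) /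
        (∑' n : ℕ, 1 / ((Nat.factorial n : ℝ) * (Nat.factorial (n + 1) : ℝ))))) := by
  have hUrec' : ∀ k : ℕ, U (k + 2) = ((k:ℤ) + 1) * U (k + 1) + U k := by
    intro k
    have := hUrec (k+1) (by omega)
    simpa using this
  have hVrec' : ∀ k : ℕ, V (k + 2) = ((k:ℤ) + 1) * V (k + 1) + V k := by
    intro k
    have := hVrec (k+1) (by omega)
    simpa using this
  -- rewrite the target sums as crB 0 and crB 1
  have hB0 : (∑' n : ℕ, 1 / ((Nat.factorial n : ℝ)) ^ 2) = crB 0 := by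
    refine tsum_congr fun n => ?_
    simp [crB, sq]
  have hB1 : (∑' n : ℕ, 1 / ((Nat.factorial n : ℝ) * (Nat.factorial (n + 1) : ℝ))) = crB 1 := rfl
  rw [hB0, hB1]
  -- V is nonnegative and eventually ≥ 1
  have hVnn : ∀ k, 0 ≤ V k := by
    refine crTwo_step (by rw [hV0]; norm_num) (by rw [hV1]) fun k hk hk1 => ?_
    rw [hVrec' k]; positivity
  have hV2 : ∀ k, 1 ≤ V (k + 2) := by
    intro k
    induction k with
    | zero => rw [hVrec' 0, hV1, hV0]; norm_num
    | succ n ih =>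
      rw [hVrec' (n+1)]
      have := hVnn (n+1)
      nlinarith
  -- key identity
  have key : ∀ k, ((-1:ℝ))^k * crB k = (V k : ℝ) * crB 0 - (U k : ℝ) * crB 1 := by
    refine crTwo_step ?_ ?_ fun k h1 h2 => ?_
    · simp [hV0, hU0]
    · simp [hV1, hU1, pow_one]
    · have hrec := crB_rec k
      have : ((-1:ℝ))^(k+2) * crB (k+2) = ((-1:ℝ))^k * crB k + ((k:ℝ)+1) * (((-1:ℝ))^(k+1) * crB (k+1)) := by
        rw [hrec]; ring
      rw [this, h1, h2, hUrec' k, hVrec' k]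
      push_cast
      ring
  -- conclusion
  rw [← Filter.tendsto_add_atTop_iff_nat 2]
  rw [← tendsto_sub_nhds_zero_iff]
  have hB1pos := crB_pos 1
  refine squeeze_zero_norm (f := fun k => (U (k+2) : ℝ) / (V (k+2) : ℝ) - crB 0 / crB 1)
    (a := fun k => crB (k+2) / crB 1) (fun k => ?_) ?_
  · have hVk : (1:ℝ) ≤ (V (k+2) : ℝ) := by exact_mod_cast hV2 k
    have hVpos : (0:ℝ) < (V (k+2) : ℝ) := lt_of_lt_of_le one_pos hVk
    have hkey := key (k+2)
    have heq : (U (k+2) : ℝ) / (V (k+2) : ℝ) - crB 0 / crB 1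
        = -(((-1:ℝ))^(k+2) * crB (k+2)) / ((V (k+2) : ℝ) * crB 1) := by
      rw [hkey]
      field_simp
      ring
    rw [heq]
    rw [Real.norm_eq_abs, abs_div, abs_neg, abs_mul, abs_mul, abs_pow, abs_neg, abs_one,
      one_pow, one_mul, abs_of_nonneg (crB_nonneg (k+2)), abs_of_pos hVpos, abs_of_pos hB1pos]
    refine div_le_div_of_nonneg_left (crB_nonneg (k+2)) hB1pos ?_
    nlinarith
  · have : Tendsto (fun k : ℕ => crB (k+2)) atTop (nhds 0) :=
      crB_tendsto_zero.comp (tendsto_add_atTop_nat 2)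
    simpa using this.div_const (crB 1)
end
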